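/- arXiv:2411.08218 — 10 statements merged into one kernel-verified Lean document; each statement's English description precedes it below -/
import Mathlib

section
/- Let a and b be real numbers with 0 ≤ a ≤ b. Then a·Pois(b) is dominated by b·Pois(a) in the convex order; that is, for every convex function f : ℝ → ℝ for which both series converge absolutely, ∑_{n=0}^∞ e^{−b} b^n/n! · f(a·n) ≤ ∑_{n=0}^∞ e^{−a} a^n/n! · f(b·n). -/
set_option maxHeartbeats 1000000

private lemma pois_binom_one (p q : ℝ) (hpq : p + q = 1) (n : ℕ) :
    ∑ k ∈ Finset.range (n+1), p ^ k * q ^ (n-k) * (n.choose k : ℝ) = 1 := by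
  rw [← add_pow, hpq, one_pow]

private lemma pois_binom_mean (p q : ℝ) (hpq : p + q = 1) (n : ℕ) :
    ∑ k ∈ Finset.range (n+1), p ^ k * q ^ (n-k) * (n.choose k : ℝ) * k = n * p := by
  induction n with
  | zero => simp
  | succ m _ =>
    rw [Finset.sum_range_succ']
    simp only [Nat.cast_zero, mul_zero, add_zero]
    push_cast
    have key : ∀ i ∈ Finset.range (m+1),
        p ^ (i+1) * q ^ (m-i) * ((m+1).choose (i+1) : ℝ) * ((i:ℝ)+1)
          = ((m:ℝ)+1) * p * (p ^ i * q ^ (m-i) * (m.choose i : ℝ)) := by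
      intro i _
      have h : ((m+1 : ℕ) : ℝ) * (m.choose i : ℝ) = ((m+1).choose (i+1) : ℝ) * ((i+1 : ℕ) : ℝ) := by
        rw [← Nat.cast_mul, ← Nat.cast_mul, Nat.add_one_mul_choose_eq]
      push_cast at h
      rw [pow_succ']
      calc p * p ^ i * q ^ (m-i) * ((m+1).choose (i+1) : ℝ) * ((i:ℝ)+1)
          = p * p ^ i * q ^ (m-i) * (((m+1).choose (i+1) : ℝ) * ((i:ℝ)+1)) := by ring
        _ = p * p ^ i * q ^ (m-i) * (((m:ℝ)+1) * (m.choose i : ℝ)) := by rw [← h]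
        _ = ((m:ℝ)+1) * p * (p ^ i * q ^ (m-i) * (m.choose i : ℝ)) := by ring
    calc ∑ i ∈ Finset.range (m+1),
          p ^ (i+1) * q ^ (m-i) * ((m+1).choose (i+1) : ℝ) * ((i:ℝ)+1)
        = ∑ i ∈ Finset.range (m+1), ((m:ℝ)+1) * p * (p ^ i * q ^ (m-i) * (m.choose i : ℝ)) :=
          Finset.sum_congr rfl key
      _ = ((m:ℝ)+1) * p * ∑ i ∈ Finset.range (m+1), p ^ i * q ^ (m-i) * (m.choose i : ℝ) := by
          rw [Finset.mul_sum]
      _ = ((m:ℝ)+1) * p := by rw [pois_binom_one p q hpq]; ring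

private lemma pois_hasSum_exp (x : ℝ) :
    HasSum (fun n : ℕ => x ^ n / n.factorial) (Real.exp x) := by
  rw [Real.exp_eq_exp_ℝ]
  exact NormedSpace.expSeries_div_hasSum_exp x

/-- For `0 ≤ a ≤ b`, `a · Pois(b)` is dominated by `b · Pois(a)` in the convex order:
for every convex `f : ℝ → ℝ` for which both series converge absolutely,
`∑ e^{-b} bⁿ/n! · f(a·n) ≤ ∑ e^{-a} aⁿ/n! · f(b·n)`. -/
theorem stmt_0 (a b : ℝ) (ha : 0 ≤ a) (hab : a ≤ b)
    (f : ℝ → ℝ) (hf : ConvexOn ℝ Set.univ f)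
    (h1 : Summable (fun n : ℕ => |Real.exp (-b) * b ^ n / n.factorial * f (a * n)|))
    (h2 : Summable (fun n : ℕ => |Real.exp (-a) * a ^ n / n.factorial * f (b * n)|)) :
    ∑' n : ℕ, Real.exp (-b) * b ^ n / n.factorial * f (a * n)
      ≤ ∑' n : ℕ, Real.exp (-a) * a ^ n / n.factorial * f (b * n) := by
  rcases lt_or_eq_of_le (ha.trans hab) with hb | hb
  · -- main case: 0 < b
    set p : ℝ := a / b with hpdef
    set q : ℝ := 1 - p with hqdef
    have hp0 : 0 ≤ p := div_nonneg ha hb.le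
    have hp1 : p ≤ 1 := (div_le_one hb).2 hab
    have hq0 : 0 ≤ q := by simp only [hqdef]; linarith
    have hpq : p + q = 1 := by simp [hqdef]
    have hbp : b * p = a := by rw [hpdef]; field_simp
    have hbq : b * q = b - a := by rw [hqdef, mul_sub, mul_one, hbp]
    set W : ℕ → ℕ → ℝ := fun n k =>
      Real.exp (-b) * b ^ n / n.factorial * (p ^ k * q ^ (n-k) * (n.choose k : ℝ)) with hWdef
    have hW0 : ∀ n k, 0 ≤ W n k := fun n k =>
      mul_nonneg (div_nonneg (mul_nonneg (Real.exp_pos (-b)).le (pow_nonneg (ha.trans hab) n))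
        (Nat.cast_nonneg _))
        (mul_nonneg (mul_nonneg (pow_nonneg hp0 _) (pow_nonneg hq0 _)) (Nat.cast_nonneg _))
    have Walt : ∀ n k, k ≤ n → W n k
        = Real.exp (-b) * a ^ k / k.factorial * ((b-a) ^ (n-k) / (n-k).factorial) := by
      intro n k hkn
      have hbn : b ^ n = b ^ k * b ^ (n-k) := by
        rw [← pow_add]; congr 1; omega
      have hk : (k.factorial : ℝ) ≠ 0 := Nat.cast_ne_zero.2 k.factorial_ne_zero
      have hnk : ((n-k).factorial : ℝ) ≠ 0 := Nat.cast_ne_zero.2 (n-k).factorial_ne_zero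
      have hn : (n.factorial : ℝ) ≠ 0 := Nat.cast_ne_zero.2 n.factorial_ne_zero
      have hcast : (n.choose k : ℝ) = n.factorial / (k.factorial * (n-k).factorial) :=
        Nat.cast_choose ℝ hkn
      rw [hWdef]
      simp only
      rw [hcast, ← hbq, ← hbp, mul_pow, mul_pow, hbn]
      field_simp
    set G : ℕ × ℕ → ℝ := fun x => (if x.2 ≤ x.1 then W x.1 x.2 else 0) * f (b * x.2) with hGdef
    -- column sums
    have hcolW : ∀ k : ℕ, HasSum (fun n => if k ≤ n then W n k else 0)
        (Real.exp (-a) * a ^ k / k.factorial) := by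
      intro k
      have hinj : Function.Injective (fun m : ℕ => m + k) := add_left_injective k
      have hrange : ∀ n : ℕ, n ∉ Set.range (fun m : ℕ => m + k) →
          (if k ≤ n then W n k else 0) = 0 := by
        intro n hn
        rw [if_neg]
        intro hkn
        exact hn ⟨n - k, by simpa using Nat.sub_add_cancel hkn⟩
      have hcomp : ((fun n => if k ≤ n then W n k else 0) ∘ (fun m : ℕ => m + k))
          = fun m => Real.exp (-b) * a ^ k / k.factorial * ((b-a) ^ m / m.factorial) := by
        funext m
        simp only [Function.comp_apply]
        rw [if_pos (Nat.le_add_left k m), Walt (m+k) k (Nat.le_add_left k m),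
          Nat.add_sub_cancel]
      have hsum : HasSum (fun m : ℕ =>
          Real.exp (-b) * a ^ k / k.factorial * ((b-a) ^ m / m.factorial))
          (Real.exp (-b) * a ^ k / k.factorial * Real.exp (b-a)) :=
        (pois_hasSum_exp (b-a)).mul_left _
      have hval : Real.exp (-b) * a ^ k / k.factorial * Real.exp (b-a)
          = Real.exp (-a) * a ^ k / k.factorial := by
        rw [show (-a : ℝ) = -b + (b - a) by ring, Real.exp_add]
        ring
      rw [← hinj.hasSum_iff hrange, hcomp]
      rw [hval] at hsum
      exact hsum
    have hcolG : ∀ k : ℕ, HasSum (fun n => G (n, k))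
        (Real.exp (-a) * a ^ k / k.factorial * f (b * k)) :=
      fun k => (hcolW k).mul_right _
    -- summability of |G| (indexed (k, n))
    have habs : Summable (fun x : ℕ × ℕ => |G (x.2, x.1)|) := by
      rw [summable_prod_of_nonneg (fun x => abs_nonneg _)]
      constructor
      · intro k
        have : (fun n => |G (n, k)|)
            = fun n => (if k ≤ n then W n k else 0) * |f (b * k)| := by
          funext n
          rw [hGdef]
          simp only [abs_mul]
          congr 1
          split
          · exact abs_of_nonneg (hW0 _ _)
          · exact abs_zero
        rw [this]
        exact ((hcolW k).mul_right _).summable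
      · have heq : (fun k : ℕ => ∑' n, |G (n, k)|)
            = fun k : ℕ => |Real.exp (-a) * a ^ k / k.factorial * f (b * k)| := by
          funext k
          have : (fun n => |G (n, k)|)
              = fun n => (if k ≤ n then W n k else 0) * |f (b * k)| := by
            funext n
            rw [hGdef]
            simp only [abs_mul]
            congr 1
            split
            · exact abs_of_nonneg (hW0 _ _)
            · exact abs_zero
          rw [this, ((hcolW k).mul_right |f (b * k)|).tsum_eq, abs_mul]
          congr 1
          rw [abs_of_nonneg (div_nonneg (mul_nonneg (Real.exp_pos (-a)).le
            (pow_nonneg ha _)) (Nat.cast_nonneg _))]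
        rw [heq]
        exact h2
    have hG : Summable G := by
      have hGs : Summable (fun x : ℕ × ℕ => G (x.2, x.1)) := habs.of_abs
      exact ((Equiv.prodComm ℕ ℕ).summable_iff).1 hGs
    set T : ℝ := ∑' x, G x with hTdef
    have hT : HasSum G T := hG.hasSum
    -- RHS equals T
    have hTsw : HasSum (fun x : ℕ × ℕ => G (x.2, x.1)) T :=
      ((Equiv.prodComm ℕ ℕ).hasSum_iff).2 hT
    have hR : HasSum (fun k : ℕ => Real.exp (-a) * a ^ k / k.factorial * f (b * k)) T :=
      hTsw.prod_fiberwise hcolG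
    -- row sums
    set S : ℕ → ℝ := fun n => ∑ k ∈ Finset.range (n+1), W n k * f (b * k) with hSdef
    have hrow : ∀ n : ℕ, HasSum (fun k => G (n, k)) (S n) := by
      intro n
      have hz : ∀ k ∉ Finset.range (n+1), G (n, k) = 0 := by
        intro k hk
        rw [hGdef]
        simp only
        rw [if_neg (by simpa [Nat.lt_succ_iff] using hk), zero_mul]
      have := hasSum_sum_of_ne_finset_zero (L := SummationFilter.unconditional ℕ) hz
      convert this using 1
      rw [hSdef]
      refine (Finset.sum_congr rfl fun k hk => ?_).symm
      rw [hGdef]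
      simp only
      rw [if_pos (by simpa [Nat.lt_succ_iff] using hk)]
    have hS : HasSum S T := hT.prod_fiberwise hrow
    -- Jensen
    have hJ : ∀ n : ℕ, Real.exp (-b) * b ^ n / n.factorial * f (a * n) ≤ S n := by
      intro n
      set c : ℝ := Real.exp (-b) * b ^ n / n.factorial with hcdef
      have hc0 : 0 ≤ c :=
        div_nonneg (mul_nonneg (Real.exp_pos (-b)).le (pow_nonneg (ha.trans hab) n))
          (Nat.cast_nonneg _)
      set w : ℕ → ℝ := fun k => p ^ k * q ^ (n-k) * (n.choose k : ℝ) with hwdef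
      have hw0 : ∀ k ∈ Finset.range (n+1), 0 ≤ w k := fun k _ =>
        mul_nonneg (mul_nonneg (pow_nonneg hp0 _) (pow_nonneg hq0 _)) (Nat.cast_nonneg _)
      have hw1 : ∑ k ∈ Finset.range (n+1), w k = 1 := pois_binom_one p q hpq n
      have hmem : ∀ k ∈ Finset.range (n+1), b * (k : ℝ) ∈ Set.univ :=
        fun _ _ => Set.mem_univ _
      have hjen := hf.map_sum_le hw0 hw1 hmem
      have hcen : ∑ k ∈ Finset.range (n+1), w k • (b * (k : ℝ)) = a * n := by
        have : ∀ k, w k • (b * (k : ℝ)) = b * (w k * k) := by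
          intro k; simp only [smul_eq_mul]; ring
        rw [Finset.sum_congr rfl fun k _ => this k, ← Finset.mul_sum,
          pois_binom_mean p q hpq n]
        rw [← mul_assoc, mul_comm b (n : ℝ), mul_assoc, hbp]
        ring
      rw [hcen] at hjen
      have := mul_le_mul_of_nonneg_left hjen hc0
      calc Real.exp (-b) * b ^ n / n.factorial * f (a * n) = c * f (a * n) := rfl
        _ ≤ c * ∑ k ∈ Finset.range (n+1), w k * f (b * k) := this
        _ = S n := by
            rw [hSdef, Finset.mul_sum]
            refine Finset.sum_congr rfl fun k _ => ?_
            rw [hWdef]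
            simp only
            ring
    calc ∑' n : ℕ, Real.exp (-b) * b ^ n / n.factorial * f (a * n)
        ≤ ∑' n, S n := Summable.tsum_le_tsum hJ h1.of_abs hS.summable
      _ = T := hS.tsum_eq
      _ = ∑' n : ℕ, Real.exp (-a) * a ^ n / n.factorial * f (b * n) := hR.tsum_eq.symm
  · -- degenerate case: b = 0, hence a = 0
    have hb0 : b = 0 := hb.symm
    subst hb0
    have ha0 : a = 0 := le_antisymm hab ha
    subst ha0
    exact le_rfl
end

section
/- Let I be a finite set, let m : I → ℝ with m_i ≥ 0 for all i, let p : I → ℝ with 0 ≤ p_i ≤ 1 for all i, and let (N_i)_{i∈I} be mutually independent random variables with N_i distributed as Pois(m_i). Let M be distributed as Pois(∑_{i∈I} p_i m_i). Then ∑_{i∈I} p_i N_i is dominated by M in the convex order: for every convex function f : ℝ → ℝ for which both expectations are well-defined, E[f(∑_{i∈I} p_i N_i)] ≤ E[f(M)]. -/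
open MeasureTheory ProbabilityTheory Finset

namespace StmtAux

/-- Poisson pmf with real parameter. -/
noncomputable def pois (c : ℝ) (n : ℕ) : ℝ := Real.exp (-c) * c ^ n / n.factorial

/-- Binomial pmf. -/
noncomputable def bin (q : ℝ) (n k : ℕ) : ℝ := n.choose k * q ^ k * (1 - q) ^ (n - k)

lemma pois_nonneg {c : ℝ} (hc : 0 ≤ c) (n : ℕ) : 0 ≤ pois c n := by
  unfold pois; positivity

lemma bin_nonneg {q : ℝ} (h0 : 0 ≤ q) (h1 : q ≤ 1) (n k : ℕ) : 0 ≤ bin q n k := by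
  have : 0 ≤ 1 - q := by linarith
  unfold bin; positivity

lemma hasSum_exp_div (c : ℝ) : HasSum (fun n => c ^ n / n.factorial) (Real.exp c) := by
  rw [Real.exp_eq_exp_ℝ]
  exact NormedSpace.expSeries_div_hasSum_exp c

lemma hasSum_pois (c : ℝ) : HasSum (pois c) 1 := by
  have h := (hasSum_exp_div c).mul_left (Real.exp (-c))
  rw [← Real.exp_add, neg_add_cancel, Real.exp_zero] at h
  convert h using 2 with n
  · rfl
  unfold pois
  ring

lemma bin_eq_zero {q : ℝ} {n k : ℕ} (h : n < k) : bin q n k = 0 := by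
  unfold bin
  rw [Nat.choose_eq_zero_of_lt h]
  simp

lemma bin_sum (q : ℝ) (n : ℕ) : ∑ k ∈ range (n + 1), bin q n k = 1 := by
  have := add_pow q (1 - q) n
  simp only [add_sub_cancel, one_pow] at this
  rw [show (1:ℝ) = ∑ m ∈ range (n + 1), q ^ m * (1 - q) ^ (n - m) * n.choose m from this]
  apply Finset.sum_congr rfl
  intro k _
  unfold bin
  ring

lemma bin_mean (q : ℝ) (n : ℕ) :
    ∑ k ∈ range (n + 1), (k : ℝ) * bin q n k = q * n := by
  cases n with
  | zero => simp
  | succ m =>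
    rw [Finset.sum_range_succ']
    have key : ∀ j : ℕ, ((j : ℝ) + 1) * bin q (m + 1) (j + 1) = q * (m + 1) * bin q m j := by
      intro j
      unfold bin
      have h := Nat.add_one_mul_choose_eq m j
      have h' : ((m + 1 : ℕ) : ℝ) * (m.choose j : ℝ)
          = ((m+1).choose (j+1) : ℝ) * ((j+1 : ℕ) : ℝ) := by
        exact_mod_cast congrArg (Nat.cast : ℕ → ℝ) h
      push_cast at h' ⊢
      linear_combination (-(q ^ (j + 1) * (1 - q) ^ (m - j))) * h'
    simp only [Nat.cast_add, Nat.cast_one, Nat.cast_zero, zero_mul, add_zero]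
    calc ∑ j ∈ range (m + 1), ((j : ℝ) + 1) * bin q (m+1) (j + 1)
        = ∑ j ∈ range (m + 1), q * (m + 1) * bin q m j :=
          Finset.sum_congr rfl fun j _ => key j
      _ = q * (m + 1) * ∑ j ∈ range (m + 1), bin q m j := by rw [Finset.mul_sum]
      _ = q * (m + 1) := by rw [bin_sum]; ring
      _ = q * ((m : ℝ) + 1) := by push_cast; ring

lemma hasSum_thinning (c q : ℝ) (k : ℕ) :
    HasSum (fun n => pois c n * bin q n k) (pois (q * c) k) := by
  set F := fun n => pois c n * bin q n k with hF
  have hshift : ∀ n, F (n + k)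
      = (Real.exp (-c) * (q*c) ^ k / k.factorial) * ((c * (1 - q)) ^ n / n.factorial) := by
    intro n
    have hch : ((n + k).choose k : ℝ) = (n + k).factorial / (k.factorial * n.factorial) := by
      have hsub : n + k - k = n := by omega
      rw [Nat.cast_choose ℝ (Nat.le_add_left k n), hsub]
    simp only [hF, pois, bin, hch]
    have h1 : ((n + k).factorial : ℝ) ≠ 0 := by positivity
    have hsub : n + k - k = n := by omega
    rw [hsub, mul_pow]
    field_simp
    rw [mul_pow]
    ring
  have h2 : HasSum (fun n => F (n + k))
      (Real.exp (-c) * (q*c) ^ k / k.factorial * Real.exp (c * (1 - q))) := by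
    simp only [hshift]
    exact (hasSum_exp_div (c * (1-q))).mul_left _
  have hzero : ∑ i ∈ range k, F i = 0 := by
    apply Finset.sum_eq_zero
    intro i hi
    rw [Finset.mem_range] at hi
    simp [hF, bin_eq_zero hi]
  rw [← hasSum_nat_add_iff' k, hzero, sub_zero]
  convert h2 using 1
  · rfl
  unfold pois
  rw [div_mul_eq_mul_div, mul_right_comm, ← Real.exp_add]
  congr 3
  ring

lemma pois_conv {I : Type*} [Fintype I] [DecidableEq I] (c : I → ℝ) (k : ℕ) :
    ∑ κ ∈ piAntidiag (univ : Finset I) k, ∏ i, pois (c i) (κ i) = pois (∑ i, c i) k := by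
  unfold pois
  have hexp : Real.exp (-(∑ i, c i)) = ∏ i, Real.exp (-(c i)) := by
    rw [← Real.exp_sum]
    congr 1
    rw [← Finset.sum_neg_distrib]
  rw [hexp, Finset.sum_pow_eq_sum_piAntidiag, Finset.mul_sum, Finset.sum_div]
  apply Finset.sum_congr rfl
  intro κ hκ
  have hsum : ∑ i, κ i = k := (Finset.mem_piAntidiag.mp hκ).1
  have hspec : ((∏ i, (κ i).factorial) * Nat.multinomial univ κ : ℝ) = (k.factorial : ℝ) := by
    exact_mod_cast congrArg (Nat.cast : ℕ → ℝ) (hsum ▸ Nat.multinomial_spec univ κ)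
  have hkf : (k.factorial : ℝ) ≠ 0 := by positivity
  have hprodf : ((∏ i, (κ i).factorial : ℕ) : ℝ) ≠ 0 := by positivity
  rw [Finset.prod_div_distrib, Finset.prod_mul_distrib]
  rw [div_eq_div_iff (by push_cast at hprodf ⊢; exact hprodf) hkf]
  push_cast
  rw [← hspec]
  push_cast
  ring

universe u

set_option maxHeartbeats 1000000 in
lemma hasSum_pi_prod_aux : ∀ (J : Type u), Finite J → ∀ (_ : Fintype J) (g : J → ℕ → ℝ),
    (∀ i n, 0 ≤ g i n) → ∀ (L : J → ℝ), (∀ i, HasSum (g i) (L i)) →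
    HasSum (fun x : J → ℕ => ∏ i, g i (x i)) (∏ i, L i) := by
  intro J hJ
  refine Finite.induction_empty_option
    (P := fun (J : Type u) => ∀ (_ : Fintype J) (g : J → ℕ → ℝ),
      (∀ i n, 0 ≤ g i n) → ∀ (L : J → ℝ), (∀ i, HasSum (g i) (L i)) →
      HasSum (fun x : J → ℕ => ∏ i, g i (x i)) (∏ i, L i)) ?_ ?_ ?_ J
  · intro α β e hP instβ g h0 L hL
    haveI instα : Fintype α := Fintype.ofEquiv β e.symm
    have h := hP instα (fun a => g (e a)) (fun a n => h0 _ _) (fun a => L (e a)) (fun a => hL (e a))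
    rw [Equiv.prod_comp e L] at h
    refine (Equiv.hasSum_iff (Equiv.arrowCongr e (Equiv.refl ℕ))).mp ?_
    have hfun : ((fun y : β → ℕ => ∏ b, g b (y b)) ∘ (Equiv.arrowCongr e (Equiv.refl ℕ)))
        = fun x : α → ℕ => ∏ a, g (e a) (x a) := by
      funext x
      simp only [Function.comp_apply]
      rw [← Equiv.prod_comp e (fun b => g b (((Equiv.arrowCongr e (Equiv.refl ℕ)) x) b))]
      apply Finset.prod_congr rfl
      intro a _
      simp [Equiv.arrowCongr]
    rw [hfun]
    exact h
  · intro inst g h0 L hL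
    simp only [Finset.univ_eq_empty, Finset.prod_empty]
    have huniq : ∀ x y : PEmpty → ℕ, x = y := fun x y => funext fun i => i.elim
    exact hasSum_single (fun i : PEmpty => i.elim) (fun b' hb' => absurd (huniq b' _) hb')
  · intro α instα IH instO g h0 L hL
    cases Subsingleton.elim instO
      (⟨Finset.insertNone (@Finset.univ α instα), fun a => by simp⟩ : Fintype (Option α))
    have hA := IH instα (fun a => g (some a)) (fun a n => h0 _ _) (fun a => L (some a))
      (fun a => hL (some a))
    have hn := hL none
    have hsummable : Summable (fun z : ℕ × (α → ℕ) => g none z.1 * ∏ a, g (some a) (z.2 a)) := by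
      apply Summable.mul_of_nonneg hn.summable hA.summable
      · intro n; exact h0 none n
      · intro x; exact Finset.prod_nonneg fun a _ => h0 _ _
    have hprod := hn.mul hA hsummable
    rw [show (univ : Finset (Option α)) = Finset.insertNone univ from rfl,
      Finset.prod_insertNone]
    refine (Equiv.hasSum_iff (Equiv.piOptionEquivProd (β := fun _ : Option α => ℕ)).symm).mp ?_
    have hfun : ((fun y : Option α → ℕ =>
        ∏ i ∈ Finset.insertNone (@Finset.univ α instα), g i (y i)) ∘
        (Equiv.piOptionEquivProd (β := fun _ : Option α => ℕ)).symm)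
        = fun z : ℕ × (α → ℕ) => g none z.1 * ∏ a, g (some a) (z.2 a) := by
      funext z
      simp only [Function.comp_apply]
      rw [Finset.prod_insertNone]
      simp [Equiv.piOptionEquivProd]
    rw [hfun]
    exact hprod

lemma hasSum_pi_prod {I : Type*} [Fintype I] (g : I → ℕ → ℝ) (h0 : ∀ i n, 0 ≤ g i n)
    (L : I → ℝ) (hL : ∀ i, HasSum (g i) (L i)) :
    HasSum (fun x : I → ℕ => ∏ i, g i (x i)) (∏ i, L i) :=
  hasSum_pi_prod_aux I (Finite.of_fintype I) inferInstance g h0 L hL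

variable {I : Type*} [Fintype I] [DecidableEq I]

lemma regroup (x : I → ℕ) (F : (I → ℕ) → ℝ) (hF : ∀ κ, (∃ i, x i < κ i) → F κ = 0) :
    ∑ k ∈ range (∑ i, x i + 1), ∑ κ ∈ piAntidiag (univ : Finset I) k, F κ
      = ∑ κ ∈ Fintype.piFinset (fun i => range (x i + 1)), F κ := by
  rw [← Finset.sum_biUnion]
  · refine (Finset.sum_subset ?_ ?_).symm
    · intro κ hκ
      rw [Fintype.mem_piFinset] at hκ
      rw [Finset.mem_biUnion]
      refine ⟨∑ i, κ i, ?_, ?_⟩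
      · rw [Finset.mem_range, Nat.lt_succ_iff]
        exact Finset.sum_le_sum fun i _ => by
          have := hκ i; rw [Finset.mem_range, Nat.lt_succ_iff] at this; exact this
      · rw [Finset.mem_piAntidiag]; exact ⟨rfl, fun i _ => Finset.mem_univ i⟩
    · intro κ _ hκ
      rw [Fintype.mem_piFinset] at hκ
      push_neg at hκ
      obtain ⟨i, hi⟩ := hκ
      rw [Finset.mem_range, Nat.lt_succ_iff, not_le] at hi
      exact hF κ ⟨i, hi⟩
  · intro a _ b _ hab
    simp only [Finset.disjoint_left]
    intro κ hκa hκb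
    exact hab (((Finset.mem_piAntidiag.mp hκa).1).symm.trans (Finset.mem_piAntidiag.mp hκb).1)

/-- pmf of a sum of independent binomials. -/
noncomputable def B (p : I → ℝ) (x : I → ℕ) (k : ℕ) : ℝ :=
  ∑ κ ∈ piAntidiag (univ : Finset I) k, ∏ i, bin (p i) (x i) (κ i)

lemma B_nonneg {p : I → ℝ} (hp : ∀ i, 0 ≤ p i ∧ p i ≤ 1) (x : I → ℕ) (k : ℕ) : 0 ≤ B p x k :=
  Finset.sum_nonneg fun κ _ => Finset.prod_nonneg fun i _ => bin_nonneg (hp i).1 (hp i).2 _ _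

lemma prod_bin_eq_zero {p : I → ℝ} {x κ : I → ℕ} (h : ∃ i, x i < κ i) :
    ∏ i, bin (p i) (x i) (κ i) = 0 := by
  obtain ⟨i, hi⟩ := h
  exact Finset.prod_eq_zero (Finset.mem_univ i) (bin_eq_zero hi)

lemma B_eq_zero {p : I → ℝ} {x : I → ℕ} {k : ℕ} (h : ∑ i, x i < k) : B p x k = 0 := by
  apply Finset.sum_eq_zero
  intro κ hκ
  rw [Finset.mem_piAntidiag] at hκ
  apply prod_bin_eq_zero
  by_contra hc
  push_neg at hc
  exact absurd (hκ.1 ▸ Finset.sum_le_sum fun i _ => hc i) (not_le.mpr h)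

lemma B_sum (p : I → ℝ) (x : I → ℕ) :
    ∑ k ∈ range (∑ i, x i + 1), B p x k = 1 := by
  unfold B
  rw [regroup x _ (fun κ h => prod_bin_eq_zero h), ← Finset.prod_univ_sum]
  rw [Finset.prod_congr rfl fun i _ => bin_sum (p i) (x i)]
  exact Finset.prod_const_one

lemma B_mean (p : I → ℝ) (x : I → ℕ) :
    ∑ k ∈ range (∑ i, x i + 1), B p x k * k = ∑ i, p i * x i := by
  unfold B
  calc ∑ k ∈ range (∑ i, x i + 1), (∑ κ ∈ piAntidiag (univ : Finset I) k,
        ∏ i, bin (p i) (x i) (κ i)) * k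
      = ∑ k ∈ range (∑ i, x i + 1), ∑ κ ∈ piAntidiag (univ : Finset I) k,
          (∑ i, (κ i : ℝ)) * ∏ i, bin (p i) (x i) (κ i) := by
        apply Finset.sum_congr rfl
        intro k _
        rw [Finset.sum_mul]
        apply Finset.sum_congr rfl
        intro κ hκ
        rw [Finset.mem_piAntidiag] at hκ
        rw [mul_comm]
        congr 1
        exact_mod_cast (congrArg (Nat.cast : ℕ → ℝ) hκ.1).symm
    _ = ∑ κ ∈ Fintype.piFinset (fun i => range (x i + 1)),
          (∑ i, (κ i : ℝ)) * ∏ j, bin (p j) (x j) (κ j) := by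
        apply regroup
        intro κ h
        rw [prod_bin_eq_zero h, mul_zero]
    _ = ∑ i, ∑ κ ∈ Fintype.piFinset (fun j => range (x j + 1)),
          (κ i : ℝ) * ∏ j, bin (p j) (x j) (κ j) := by
        rw [Finset.sum_comm]
        apply Finset.sum_congr rfl
        intro κ _
        rw [Finset.sum_mul]
    _ = ∑ i, p i * x i := by
        apply Finset.sum_congr rfl
        intro i _
        have hsplit : ∀ κ : I → ℕ, (κ i : ℝ) * ∏ j, bin (p j) (x j) (κ j)
            = ∏ j, (fun (j : I) (t : ℕ) => if j = i then (t : ℝ) * bin (p j) (x j) t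
                else bin (p j) (x j) t) j (κ j) := by
          intro κ
          rw [← Finset.mul_prod_erase univ _ (Finset.mem_univ i),
              ← Finset.mul_prod_erase univ _ (Finset.mem_univ i)]
          simp only [if_pos rfl]
          rw [← mul_assoc]
          congr 1
          apply Finset.prod_congr rfl
          intro j hj
          rw [Finset.mem_erase] at hj
          rw [if_neg hj.1]
        rw [Finset.sum_congr rfl fun κ _ => hsplit κ,
          ← Finset.prod_univ_sum (fun j => range (x j + 1))
            (fun (j : I) (t : ℕ) => if j = i then (t : ℝ) * bin (p j) (x j) t
              else bin (p j) (x j) t)]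
        calc ∏ j, ∑ t ∈ range (x j + 1), (fun (j : I) (t : ℕ) =>
                if j = i then (t : ℝ) * bin (p j) (x j) t
                else bin (p j) (x j) t) j t
            = ∏ j, (if j = i then p j * x j else 1) := by
              apply Finset.prod_congr rfl
              intro j _
              by_cases hj : j = i
              · simp only [if_pos hj]
                exact bin_mean (p j) (x j)
              · simp only [if_neg hj]
                exact bin_sum (p j) (x j)
          _ = p i * x i := by
              rw [Finset.prod_ite_eq' univ i (fun j => p j * (x j : ℝ))]
              simp

/-- The grand mixture identity: Poisson mixture of sums of binomials is Poisson. -/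
lemma hasSum_GM (m p : I → ℝ) (hm : ∀ i, 0 ≤ m i) (hp : ∀ i, 0 ≤ p i ∧ p i ≤ 1) (k : ℕ) :
    HasSum (fun x : I → ℕ => (∏ i, pois (m i) (x i)) * B p x k)
      (pois (∑ i, p i * m i) k) := by
  have h1 : ∀ κ ∈ piAntidiag (univ : Finset I) k,
      HasSum (fun x : I → ℕ => ∏ i, (pois (m i) (x i) * bin (p i) (x i) (κ i)))
        (∏ i, pois (p i * m i) (κ i)) := fun κ _ =>
    hasSum_pi_prod (fun i t => pois (m i) t * bin (p i) t (κ i))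
      (fun i n => mul_nonneg (pois_nonneg (hm i) n)
        (bin_nonneg (hp i).1 (hp i).2 _ _))
      (fun i => pois (p i * m i) (κ i))
      (fun i => hasSum_thinning (m i) (p i) (κ i))
  have h2 := hasSum_sum h1
  rw [pois_conv (fun i => p i * m i) k] at h2
  convert h2 using 1
  funext x
  unfold B
  rw [Finset.mul_sum]
  apply Finset.sum_congr rfl
  intro κ _
  rw [← Finset.prod_mul_distrib]

/-- On a countable space, integrability gives summability of the pmf-weighted values. -/
lemma summable_pmf_mul {α : Type*} [MeasurableSpace α] [Countable α] [MeasurableSingletonClass α]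
    {ν : Measure α} {F : α → ℝ} (h : Integrable F ν) :
    Summable (fun a => (ν {a}).toReal * F a) := by
  have h1 := h.hasFiniteIntegral
  rw [hasFiniteIntegral_def, lintegral_countable'] at h1
  have h2 := ENNReal.summable_toReal h1.ne
  apply Summable.of_abs
  apply h2.congr
  intro a
  rw [abs_mul, abs_of_nonneg ENNReal.toReal_nonneg, ENNReal.toReal_mul, mul_comm]
  simp [Real.norm_eq_abs]

end StmtAux

open StmtAux

/-- If `(N i)` are mutually independent with `N i ~ Pois(m i)` and
`M ~ Pois(∑ p i · m i)` with `0 ≤ p i ≤ 1` and `m i ≥ 0`, then `∑ p i · N i` is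
dominated by `M` in the convex order. -/
theorem stmt_1 {Ω : Type*} [MeasurableSpace Ω] (μ : Measure Ω) [IsProbabilityMeasure μ]
    {I : Type*} [Fintype I]
    (m p : I → ℝ) (hm : ∀ i, 0 ≤ m i) (hp : ∀ i, 0 ≤ p i ∧ p i ≤ 1)
    (N : I → Ω → ℕ) (hNmeas : ∀ i, Measurable (N i))
    (hindep : iIndepFun N μ)
    (hNdist : ∀ i n, μ {ω | N i ω = n} =
      ENNReal.ofReal (Real.exp (-(m i)) * (m i) ^ n / n.factorial))
    (M : Ω → ℕ) (hMmeas : Measurable M)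
    (hMdist : ∀ n, μ {ω | M ω = n} =
      ENNReal.ofReal (Real.exp (-(∑ i, p i * m i)) * (∑ i, p i * m i) ^ n / n.factorial))
    (f : ℝ → ℝ) (hf : ConvexOn ℝ Set.univ f)
    (hint1 : Integrable (fun ω => f (∑ i, p i * (N i ω))) μ)
    (hint2 : Integrable (fun ω => f (M ω)) μ) :
    ∫ ω, f (∑ i, p i * (N i ω)) ∂μ ≤ ∫ ω, f (M ω) ∂μ := by
  classical
  have hlam0 : 0 ≤ ∑ i, p i * m i :=
    Finset.sum_nonneg fun i _ => mul_nonneg (hp i).1 (hm i)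
  haveI : MeasurableSingletonClass (I → ℕ) := by
    constructor
    intro x
    have hx : {x} = ⋂ i, (fun y : I → ℕ => y i) ⁻¹' {x i} := by
      ext y
      simp [funext_iff, Set.mem_iInter, eq_comm]
    rw [hx]
    exact MeasurableSet.iInter fun i => (measurable_pi_apply i) (measurableSet_singleton _)
  set Φ : Ω → (I → ℕ) := fun ω i => N i ω with hΦdef
  have hΦ : Measurable Φ := measurable_pi_lambda _ hNmeas
  set g : (I → ℕ) → ℝ := fun x => ∑ i, p i * x i with hgdef
  have hfg : Measurable (fun x : I → ℕ => f (g x)) := measurable_of_countable _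
  set ν := μ.map Φ with hν
  set w : (I → ℕ) → ℝ := fun x => ∏ i, pois (m i) (x i) with hwdef
  have hwnn : ∀ x, 0 ≤ w x := fun x =>
    Finset.prod_nonneg fun i _ => pois_nonneg (hm i) _
  -- point masses of ν
  have hνx : ∀ x : I → ℕ, (ν {x}).toReal = w x := by
    intro x
    have hset : Φ ⁻¹' {x} = ⋂ i, N i ⁻¹' {x i} := by
      ext ω
      simp [hΦdef, funext_iff, Set.mem_iInter]
    rw [hν, Measure.map_apply hΦ (measurableSet_singleton x), hset,
      hindep.meas_iInter (fun i => ⟨{x i}, measurableSet_singleton _, rfl⟩),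
      ENNReal.toReal_prod]
    apply Finset.prod_congr rfl
    intro i _
    have : N i ⁻¹' {x i} = {ω | N i ω = x i} := rfl
    rw [this, hNdist i (x i), ENNReal.toReal_ofReal (by exact pois_nonneg (hm i) (x i))]
    rfl
  -- point masses of map M μ
  have hMk : ∀ k : ℕ, ((μ.map M) {k}).toReal = pois (∑ i, p i * m i) k := by
    intro k
    have : M ⁻¹' {k} = {ω | M ω = k} := rfl
    rw [Measure.map_apply hMmeas (measurableSet_singleton k), this, hMdist k,
      ENNReal.toReal_ofReal (by exact pois_nonneg hlam0 k)]
    rfl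
  -- integrability transfers
  have hint1' : Integrable (fun x => f (g x)) ν := by
    rw [hν, integrable_map_measure hfg.aestronglyMeasurable hΦ.aemeasurable]
    exact hint1
  have hfM : Measurable (fun k : ℕ => f k) := measurable_of_countable _
  have hint2' : Integrable (fun k : ℕ => f k) (μ.map M) := by
    rw [integrable_map_measure hfM.aestronglyMeasurable hMmeas.aemeasurable]
    exact hint2
  -- integral identities
  have hL : ∫ ω, f (∑ i, p i * (N i ω)) ∂μ = ∑' x : I → ℕ, w x * f (g x) := by
    rw [show (fun ω => f (∑ i, p i * (N i ω))) = fun ω => f (g (Φ ω)) from rfl]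
    rw [show ∫ ω, f (g (Φ ω)) ∂μ = ∫ x, f (g x) ∂ν from
      (integral_map hΦ.aemeasurable hfg.aestronglyMeasurable).symm]
    rw [integral_countable' hint1']
    apply tsum_congr
    intro x
    rw [smul_eq_mul, measureReal_def, hνx x]
  have hR : ∫ ω, f (M ω) ∂μ = ∑' k : ℕ, pois (∑ i, p i * m i) k * f k := by
    rw [show ∫ ω, f (M ω) ∂μ = ∫ k, f k ∂(μ.map M) from
      (integral_map hMmeas.aemeasurable hfM.aestronglyMeasurable).symm]
    rw [integral_countable' hint2']
    apply tsum_congr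
    intro k
    rw [smul_eq_mul, measureReal_def, hMk k]
  -- the grand mixture identity in current notation
  have hGM : ∀ k : ℕ, HasSum (fun x : I → ℕ => w x * B p x k) (pois (∑ i, p i * m i) k) :=
    fun k => hasSum_GM m p hm hp k
  -- Jensen pointwise
  have hJensen : ∀ x : I → ℕ, f (g x) ≤ ∑ k ∈ range (∑ i, x i + 1), B p x k * f k := by
    intro x
    have hmean : ∑ k ∈ range (∑ i, x i + 1), B p x k • (k : ℝ) = g x := by
      rw [hgdef]
      simp only [smul_eq_mul]
      exact B_mean p x
    have h := hf.map_sum_le (t := range (∑ i, x i + 1)) (w := B p x) (p := fun k => (k : ℝ))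
      (fun k _ => B_nonneg hp x k) (B_sum p x) (fun k _ => Set.mem_univ _)
    rw [hmean] at h
    simpa only [smul_eq_mul] using h
  -- summability on the RHS
  have hRabs : Summable (fun k : ℕ => pois (∑ i, p i * m i) k * |f k|) := by
    have := summable_pmf_mul hint2'.abs
    apply this.congr
    intro k
    rw [hMk k]
  -- double family
  set H : ℕ × (I → ℕ) → ℝ := fun z => w z.2 * B p z.2 z.1 * f z.1 with hHdef
  have hHabs : Summable (fun z : ℕ × (I → ℕ) => w z.2 * B p z.2 z.1 * |f z.1|) := by
    rw [summable_prod_of_nonneg (fun z => mul_nonneg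
      (mul_nonneg (hwnn z.2) (B_nonneg hp z.2 z.1)) (abs_nonneg _))]
    constructor
    · intro k
      exact ((hGM k).mul_right |f k|).summable
    · apply hRabs.congr
      intro k
      exact (((hGM k).mul_right |f k|).tsum_eq).symm
  have hH : Summable H := by
    apply Summable.of_abs
    apply hHabs.congr
    intro z
    rw [hHdef]
    simp only
    rw [abs_mul, abs_of_nonneg (mul_nonneg (hwnn z.2) (B_nonneg hp z.2 z.1))]
  -- sum of H computed over k-fibers
  have hres1 : HasSum (fun k : ℕ => pois (∑ i, p i * m i) k * f k) (∑' z, H z) :=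
    hH.hasSum.prod_fiberwise (fun k => (hGM k).mul_right (f k))
  -- sum of H computed over x-fibers
  have hfiber2 : ∀ x : I → ℕ, HasSum (fun k => H (k, x))
      (w x * ∑ k ∈ range (∑ i, x i + 1), B p x k * f k) := by
    intro x
    have h0 : ∀ k ∉ range (∑ i, x i + 1), H (k, x) = 0 := by
      intro k hk
      rw [Finset.mem_range, not_lt, Nat.succ_le_iff] at hk
      simp only [hHdef]
      rw [B_eq_zero hk, mul_zero, zero_mul]
    have := hasSum_sum_of_ne_finset_zero (L := SummationFilter.unconditional ℕ) h0
    convert this using 1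
    rw [Finset.mul_sum]
    apply Finset.sum_congr rfl
    intro k _
    simp only [hHdef]
    ring
  have hswap : HasSum (fun z : (I → ℕ) × ℕ => H (z.2, z.1)) (∑' z, H z) := by
    have := (Equiv.hasSum_iff (Equiv.prodComm (I → ℕ) ℕ)).mpr hH.hasSum
    exact this
  have hres2 : HasSum (fun x : I → ℕ => w x * ∑ k ∈ range (∑ i, x i + 1), B p x k * f k)
      (∑' z, H z) :=
    hswap.prod_fiberwise (fun x => hfiber2 x)
  -- summability on the LHS
  have hLsum : Summable (fun x : I → ℕ => w x * f (g x)) := by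
    have := summable_pmf_mul hint1'
    apply this.congr
    intro x
    rw [hνx x]
  -- conclude
  rw [hL, hR]
  calc ∑' x : I → ℕ, w x * f (g x)
      ≤ ∑' x : I → ℕ, w x * ∑ k ∈ range (∑ i, x i + 1), B p x k * f k := by
        apply hLsum.tsum_le_tsum _ hres2.summable
        intro x
        exact mul_le_mul_of_nonneg_left (hJensen x) (hwnn x)
    _ = ∑' z, H z := hres2.tsum_eq
    _ = ∑' k : ℕ, pois (∑ i, p i * m i) k * f k := hres1.tsum_eq.symm
end

section
/- Let I be a finite set and let c, u : I → ℝ satisfy c_i ≥ 0 and u_i ≥ 0 for all i ∈ I. Then the following two conditions are equivalent: (a) for every subset H ⊆ I, ∑_{i∈H} c_i u_i ≤ 1 − exp(−∑_{i∈H} u_i); (b) for every θ : I → ℝ with 0 ≤ θ_i ≤ u_i for all i ∈ I, ∑_{i∈I} c_i θ_i ≤ 1 − exp(−∑_{i∈I} θ_i). -/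
/-- One-dimensional convexity step: `t ↦ a t + E e^{-t}` on `[0, w]` is maximized at an
endpoint. -/
lemma endpoint_max (a E w t : ℝ) (ha : 0 ≤ a) (hE : 0 ≤ E)
    (ht0 : 0 ≤ t) (htw : t ≤ w) :
    a * t + E * Real.exp (-t) ≤ max E (a * w + E * Real.exp (-w)) := by
  rcases eq_or_lt_of_le (ht0.trans htw) with hw | hw
  · have ht : t = 0 := le_antisymm (htw.trans hw.ge) ht0
    simp [ht]
  · set s := t / w with hs
    have hs0 : 0 ≤ s := div_nonneg ht0 hw.le
    have hs1 : s ≤ 1 := (div_le_one hw).2 htw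
    have hts : t = s * w := by rw [hs, div_mul_cancel₀ t hw.ne']
    have hexp : Real.exp (-t) ≤ (1 - s) * 1 + s * Real.exp (-w) := by
      have := convexOn_exp.2 (Set.mem_univ (0:ℝ)) (Set.mem_univ (-w))
        (by linarith : (0:ℝ) ≤ 1 - s) hs0 (by ring)
      simpa [hts, smul_eq_mul, Real.exp_zero, mul_comm] using this
    have h1 : a * t + E * Real.exp (-t)
        ≤ (1 - s) * E + s * (a * w + E * Real.exp (-w)) := by
      have := mul_le_mul_of_nonneg_left hexp hE
      nlinarith
    have h2 : (1 - s) * E + s * (a * w + E * Real.exp (-w))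
        ≤ max E (a * w + E * Real.exp (-w)) := by
      have hx := le_max_left E (a * w + E * Real.exp (-w))
      have hy := le_max_right E (a * w + E * Real.exp (-w))
      nlinarith
    linarith

/-- The exponentially many subset constraints `∑_{i∈H} c_i u_i ≤ 1 − exp(−∑_{i∈H} u_i)`
are equivalent to the continuous box constraints
`∑ c_i θ_i ≤ 1 − exp(−∑ θ_i)` for all `0 ≤ θ ≤ u`. -/
theorem stmt_3 {I : Type*} [Fintype I] (c u : I → ℝ)
    (hc : ∀ i, 0 ≤ c i) (hu : ∀ i, 0 ≤ u i) :
    (∀ H : Finset I, ∑ i ∈ H, c i * u i ≤ 1 - Real.exp (-∑ i ∈ H, u i)) ↔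
    (∀ θ : I → ℝ, (∀ i, 0 ≤ θ i ∧ θ i ≤ u i) →
      ∑ i, c i * θ i ≤ 1 - Real.exp (-∑ i, θ i)) := by
  classical
  constructor
  · intro hH
    have key : ∀ F : Finset I, ∀ θ : I → ℝ, (∀ i, 0 ≤ θ i ∧ θ i ≤ u i) →
        (∀ i ∉ F, θ i = 0 ∨ θ i = u i) →
        ∑ i, c i * θ i + Real.exp (-∑ i, θ i) ≤ 1 := by
      intro F
      induction F using Finset.induction with
      | empty =>
        intro θ hbox hout
        have hout' : ∀ i, θ i = 0 ∨ θ i = u i := fun i => hout i (Finset.notMem_empty i)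
        set H : Finset I := Finset.univ.filter (fun i => θ i ≠ 0) with hHdef
        have hmem : ∀ i ∈ H, θ i = u i := by
          intro i hi
          simp only [hHdef, Finset.mem_filter] at hi
          exact (hout' i).resolve_left hi.2
        have e1 : ∑ i, c i * θ i = ∑ i ∈ H, c i * u i := by
          rw [← Finset.sum_subset (Finset.subset_univ H)
            (by intro x _ hx; simp only [hHdef, Finset.mem_filter, Finset.mem_univ,
              true_and, not_not] at hx; simp [hx])]
          exact Finset.sum_congr rfl (fun i hi => by rw [hmem i hi])
        have e2 : ∑ i, θ i = ∑ i ∈ H, u i := by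
          rw [← Finset.sum_subset (Finset.subset_univ H)
            (by intro x _ hx; simpa only [hHdef, Finset.mem_filter, Finset.mem_univ,
              true_and, not_not] using hx)]
          exact Finset.sum_congr rfl (fun i hi => hmem i hi)
        have := hH H
        rw [e1, e2]; linarith
      | @insert j F hj ih =>
        intro θ hbox hout
        set A : ℝ := ∑ i ∈ Finset.univ.erase j, c i * θ i with hA
        set B : ℝ := ∑ i ∈ Finset.univ.erase j, θ i with hB
        have hsum : ∀ t : ℝ, ∑ i, c i * Function.update θ j t i = c j * t + A := by
          intro t
          rw [← Finset.add_sum_erase _ _ (Finset.mem_univ j), Function.update_self]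
          congr 1
          exact Finset.sum_congr rfl
            (fun i hi => by rw [Function.update_of_ne (Finset.ne_of_mem_erase hi)])
        have hsum' : ∀ t : ℝ, ∑ i, Function.update θ j t i = t + B := by
          intro t
          rw [← Finset.add_sum_erase _ _ (Finset.mem_univ j), Function.update_self]
          congr 1
          exact Finset.sum_congr rfl
            (fun i hi => by rw [Function.update_of_ne (Finset.ne_of_mem_erase hi)])
        have hsum0 : ∑ i, c i * θ i = c j * θ j + A := by
          have := hsum (θ j); simpa [Function.update_eq_self] using this
        have hsum0' : ∑ i, θ i = θ j + B := by
          have := hsum' (θ j); simpa [Function.update_eq_self] using this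
        have hbox' : ∀ t, 0 ≤ t → t ≤ u j →
            ∀ i, 0 ≤ Function.update θ j t i ∧ Function.update θ j t i ≤ u i := by
          intro t ht0 htu i
          rcases eq_or_ne i j with rfl | h
          · simp [ht0, htu]
          · simp [Function.update_of_ne h, hbox i]
        have hout' : ∀ t : ℝ, ∀ i ∉ F,
            Function.update θ j t i = 0 ∨ Function.update θ j t i = u i ∨ i = j := by
          intro t i hi
          rcases eq_or_ne i j with rfl | h
          · tauto
          · rw [Function.update_of_ne h]
            rcases hout i (by simp [Finset.mem_insert, h, hi]) with h0 | h0
            · exact Or.inl h0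
            · exact Or.inr (Or.inl h0)
        have h0 : ∑ i, c i * Function.update θ j 0 i
            + Real.exp (-∑ i, Function.update θ j 0 i) ≤ 1 := by
          apply ih _ (hbox' 0 le_rfl (hu j))
          intro i hi
          rcases hout' 0 i hi with h | h | h
          · exact Or.inl h
          · exact Or.inr h
          · subst h; simp
        have h1 : ∑ i, c i * Function.update θ j (u j) i
            + Real.exp (-∑ i, Function.update θ j (u j) i) ≤ 1 := by
          apply ih _ (hbox' (u j) (hu j) le_rfl)
          intro i hi
          rcases hout' (u j) i hi with h | h | h
          · exact Or.inl h
          · exact Or.inr h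
          · subst h; simp
        rw [hsum, hsum'] at h0 h1
        have hEB : (0:ℝ) ≤ Real.exp (-B) := (Real.exp_pos _).le
        have hconv := endpoint_max (c j) (Real.exp (-B)) (u j) (θ j) (hc j) hEB
          (hbox j).1 (hbox j).2
        have hexp : ∀ t : ℝ, Real.exp (-(t + B)) = Real.exp (-B) * Real.exp (-t) := by
          intro t
          rw [← Real.exp_add]; ring_nf
        rw [hsum0, hsum0', hexp]
        rw [hexp] at h0 h1
        simp only [mul_zero, zero_add, neg_zero, Real.exp_zero, mul_one] at h0
        rcases max_cases (Real.exp (-B))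
          (c j * u j + Real.exp (-B) * Real.exp (-(u j))) with ⟨hm, _⟩ | ⟨hm, _⟩ <;>
          rw [hm] at hconv <;> linarith
    intro θ hbox
    have := key Finset.univ θ hbox (by intro i hi; simp at hi)
    linarith
  · intro hθ H
    have := hθ (fun i => if i ∈ H then u i else 0)
      (fun i => by by_cases h : i ∈ H <;> simp [h, hu i])
    simp only [mul_ite, mul_zero, Finset.sum_ite_mem, Finset.univ_inter] at this
    convert this using 3
end

section
/- Let n ∈ ℕ and let c_1 ≥ c_2 ≥ … ≥ c_n ≥ 0 and u_1, …, u_n ≥ 0 be real numbers. Suppose that for every k ∈ {0, 1, …, n}, ∑_{i=1}^{k} c_i u_i ≤ 1 − exp(−∑_{i=1}^{k} u_i). Then for every subset H ⊆ {1, …, n}, ∑_{i∈H} c_i u_i ≤ 1 − exp(−∑_{i∈H} u_i). -/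
/-- Prefix sufficiency: if the coefficients `c` are nonincreasing and nonnegative and
all prefix constraints hold, then all subset constraints hold. -/
theorem stmt_4 (n : ℕ) (c u : Fin n → ℝ)
    (hmono : ∀ i j : Fin n, i ≤ j → c j ≤ c i)
    (hc : ∀ i, 0 ≤ c i) (hu : ∀ i, 0 ≤ u i)
    (hpre : ∀ k : ℕ, k ≤ n →
      ∑ i ∈ Finset.univ.filter (fun i : Fin n => (i : ℕ) < k), c i * u i ≤
        1 - Real.exp (-∑ i ∈ Finset.univ.filter (fun i : Fin n => (i : ℕ) < k), u i)) :
    ∀ H : Finset (Fin n),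
      ∑ i ∈ H, c i * u i ≤ 1 - Real.exp (-∑ i ∈ H, u i) := by
  classical
  set f : Finset (Fin n) → ℝ :=
    fun H => ∑ i ∈ H, c i * u i - (1 - Real.exp (-∑ i ∈ H, u i)) with hf
  suffices hmaxle : ∀ H : Finset (Fin n), f H ≤ 0 by
    intro H
    have := hmaxle H
    simp only [hf] at this
    linarith
  obtain ⟨H, -, hmax⟩ := Finset.exists_max_image
    (Finset.univ : Finset (Finset (Fin n))) f ⟨∅, Finset.mem_univ ∅⟩
  intro H₀
  have hH0 : f H₀ ≤ f H := hmax H₀ (Finset.mem_univ _)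
  refine hH0.trans ?_
  -- now show f H ≤ 0 for the maximizer H
  set A : ℝ := ∑ i ∈ H, u i with hA
  -- key local optimality facts
  have key_ins : ∀ i : Fin n, i ∉ H → 0 < u i → c i < Real.exp (-A) := by
    intro i hiH hui
    have h1 : f (insert i H) ≤ f H := hmax _ (Finset.mem_univ _)
    have hs1 : ∑ j ∈ insert i H, c j * u j = c i * u i + ∑ j ∈ H, c j * u j :=
      Finset.sum_insert hiH
    have hs2 : ∑ j ∈ insert i H, u j = u i + A := Finset.sum_insert hiH
    rw [hf] at h1
    simp only [hs1, hs2] at h1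
    have hexp : Real.exp (-(u i + A)) = Real.exp (-u i) * Real.exp (-A) := by
      rw [← Real.exp_add]; ring_nf
    have h2 : c i * u i ≤ Real.exp (-A) - Real.exp (-u i) * Real.exp (-A) := by
      rw [← hexp]; linarith
    have h3 : 1 - u i < Real.exp (-u i) := by
      have := Real.add_one_lt_exp (x := -u i) (neg_ne_zero.mpr hui.ne')
      linarith
    have h4 : c i * u i < Real.exp (-A) * u i := by
      have hEpos : 0 < Real.exp (-A) := Real.exp_pos _
      nlinarith
    exact lt_of_mul_lt_mul_right (by linarith [h4]) hui.le
  have key_del : ∀ j : Fin n, j ∈ H → 0 < u j → Real.exp (-A) < c j := by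
    intro j hjH huj
    have h1 : f (H.erase j) ≤ f H := hmax _ (Finset.mem_univ _)
    have hs1 : ∑ i ∈ H.erase j, c i * u i = (∑ i ∈ H, c i * u i) - c j * u j := by
      rw [eq_sub_iff_add_eq, Finset.sum_erase_add _ _ hjH]
    have hs2 : ∑ i ∈ H.erase j, u i = A - u j := by
      rw [eq_sub_iff_add_eq, hA, Finset.sum_erase_add _ _ hjH]
    rw [hf] at h1
    simp only [hs1, hs2] at h1
    have hexp : Real.exp (-(A - u j)) = Real.exp (u j) * Real.exp (-A) := by
      rw [← Real.exp_add]; ring_nf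
    have h2 : Real.exp (u j) * Real.exp (-A) - Real.exp (-A) ≤ c j * u j := by
      rw [← hexp]; linarith
    have h3 : u j + 1 < Real.exp (u j) := Real.add_one_lt_exp huj.ne'
    have h4 : Real.exp (-A) * u j < c j * u j := by
      have hEpos : 0 < Real.exp (-A) := Real.exp_pos _
      nlinarith
    exact lt_of_mul_lt_mul_right h4 huj.le
  by_cases hJ : (H.filter fun i => 0 < u i) = ∅
  · -- all u vanish on H
    have hzero : ∀ i ∈ H, u i = 0 := by
      intro i hi
      by_contra h
      have : 0 < u i := lt_of_le_of_ne (hu i) (Ne.symm h)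
      exact Finset.eq_empty_iff_forall_notMem.mp hJ i (Finset.mem_filter.mpr ⟨hi, this⟩)
    have h1 : ∑ i ∈ H, c i * u i = 0 :=
      Finset.sum_eq_zero fun i hi => by rw [hzero i hi, mul_zero]
    have h2 : A = 0 := Finset.sum_eq_zero hzero
    simp [hf, h1, ← hA, h2]
  · have hne : (H.filter fun i => 0 < u i).Nonempty := Finset.nonempty_of_ne_empty hJ
    set j : Fin n := (H.filter fun i => 0 < u i).max' hne with hj
    have hjmem := (H.filter fun i => 0 < u i).max'_mem hne
    have hjH : j ∈ H := (Finset.mem_filter.mp hjmem).1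
    have huj : 0 < u j := (Finset.mem_filter.mp hjmem).2
    set P : Finset (Fin n) := Finset.univ.filter (fun i : Fin n => (i : ℕ) < (j : ℕ) + 1)
      with hP
    -- the positive-u parts of P and H coincide
    have hsetseq : (P.filter fun i => 0 < u i) = (H.filter fun i => 0 < u i) := by
      ext i
      simp only [hP, Finset.mem_filter, Finset.mem_univ, true_and]
      constructor
      · rintro ⟨hik, hui⟩
        refine ⟨?_, hui⟩
        by_contra hiH
        have hij : i ≤ j := by
          rw [Fin.le_def]; omega
        have h1 : c i < Real.exp (-A) := key_ins i hiH hui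
        have h2 : Real.exp (-A) < c j := key_del j hjH huj
        have h3 : c j ≤ c i := hmono i j hij
        linarith
      · rintro ⟨hiH, hui⟩
        refine ⟨?_, hui⟩
        have : i ≤ j := Finset.le_max' _ i (Finset.mem_filter.mpr ⟨hiH, hui⟩)
        rw [Fin.le_def] at this; omega
    -- sums over P and H agree
    have sum_eq : ∀ (S : Finset (Fin n)) (g : Fin n → ℝ), (∀ i, u i = 0 → g i = 0) →
        ∑ i ∈ S, g i = ∑ i ∈ S.filter fun i => 0 < u i, g i := by
      intro S g hg
      rw [Finset.sum_filter_of_ne]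
      intro x _ hx
      by_contra h
      exact hx (hg x (le_antisymm (not_lt.mp h) (hu x)))
    have hcu : ∀ i, u i = 0 → c i * u i = 0 := fun i h => by rw [h, mul_zero]
    have huu : ∀ i, u i = 0 → u i = 0 := fun i h => h
    have e1 : ∑ i ∈ H, c i * u i = ∑ i ∈ P, c i * u i := by
      rw [sum_eq H _ hcu, sum_eq P _ hcu, hsetseq]
    have e2 : A = ∑ i ∈ P, u i := by
      rw [hA, sum_eq H _ huu, sum_eq P _ huu, hsetseq]
    have hple : f P ≤ 0 := by
      have := hpre ((j : ℕ) + 1) (by omega)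
      rw [hf]
      simp only [← hP] at this ⊢
      linarith
    rw [hf] at hple ⊢
    simp only [← hA, e1, e2] at *
    exact hple
end

section
/- For every ε ∈ (0, 0.1) there exists b > 0 such that for all real numbers σ ∈ [1 − ε/2, 1] and σ_S ∈ [0, σ] with σ − σ_S ≤ 1 − ε, the following holds, where m := σ_S/(1 − ε): 1 − e^{−(σ − σ_S)} · (∑_{n=0}^∞ e^{−m} m^n/n! · max(0, 1 − (1 − ε)·n)) ≥ (1 − 1/e + b) · σ. -/
lemma aux_mono (x0 x : ℝ) (h0 : 0 ≤ x0) (h : x0 ≤ x) :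
    (1 + x) * Real.exp (-x) ≤ (1 + x0) * Real.exp (-x0) := by
  have he : (x - x0) + 1 ≤ Real.exp (x - x0) := Real.add_one_le_exp _
  have h1 : (1 + x) ≤ (1 + x0) * Real.exp (x - x0) := by
    nlinarith [Real.exp_pos (x - x0), mul_nonneg h0 (sub_nonneg.2 h)]
  have h2 : (1 + x) * Real.exp (-x) ≤ (1 + x0) * Real.exp (x - x0) * Real.exp (-x) :=
    mul_le_mul_of_nonneg_right h1 (Real.exp_pos _).le
  have h3 : Real.exp (x - x0) * Real.exp (-x) = Real.exp (-x0) := by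
    rw [← Real.exp_add]; ring_nf
  calc (1 + x) * Real.exp (-x) ≤ (1 + x0) * Real.exp (x - x0) * Real.exp (-x) := h2
    _ = (1 + x0) * Real.exp (-x0) := by rw [mul_assoc, h3]

lemma aux_concave (σ : ℝ) (h0 : 0 ≤ σ) (h1 : σ ≤ 1) :
    (1 - 1 / Real.exp 1) * σ ≤ 1 - Real.exp (-σ) := by
  have hc := convexOn_exp.2 (Set.mem_univ (0:ℝ)) (Set.mem_univ (-1))
    (by linarith : (0:ℝ) ≤ 1 - σ) h0 (by ring : (1 - σ) + σ = 1)
  simp only [smul_eq_mul, mul_zero, zero_add, mul_neg, mul_one, Real.exp_zero] at hc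
  rw [Real.exp_neg] at hc ⊢
  rw [Real.exp_neg] at hc
  rw [show (1:ℝ) / Real.exp 1 = (Real.exp 1)⁻¹ from one_div _]
  linarith

/-- For every `ε ∈ (0, 0.1)` there is `b > 0` such that for all
`σ ∈ [1 − ε/2, 1]`, `σ_S ∈ [0, σ]` with `σ − σ_S ≤ 1 − ε`, writing `m := σ_S/(1−ε)`,
`1 − e^{−(σ−σ_S)} · E[max(0, 1 − (1−ε)·Pois(m))] ≥ (1 − 1/e + b)·σ`. -/
theorem stmt_5 (ε : ℝ) (hε0 : 0 < ε) (hε1 : ε < 0.1) :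
    ∃ b : ℝ, 0 < b ∧
      ∀ σ σS : ℝ, 1 - ε / 2 ≤ σ → σ ≤ 1 → 0 ≤ σS → σS ≤ σ → σ - σS ≤ 1 - ε →
        (1 - 1 / Real.exp 1 + b) * σ ≤
          1 - Real.exp (-(σ - σS)) *
            ∑' n : ℕ, Real.exp (-(σS / (1 - ε))) * (σS / (1 - ε)) ^ n / n.factorial *
              max 0 (1 - (1 - ε) * n) := by
  set x0 : ℝ := ε ^ 2 / 2 with hx0def
  have hx0 : 0 < x0 := by positivity
  have hprod : Real.exp x0 * Real.exp (-x0) = 1 := by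
    rw [← Real.exp_add]; simp
  have hc : 0 < 1 - (1 + x0) * Real.exp (-x0) := by
    have h := Real.add_one_lt_exp (x := x0) (ne_of_gt hx0)
    nlinarith [Real.exp_pos (-x0)]
  refine ⟨(1 - (1 + x0) * Real.exp (-x0)) / Real.exp 1, by positivity, ?_⟩
  intro σ σS h1 h2 h3 h4 h5
  have hε : (0:ℝ) < 1 - ε := by norm_num at hε1 ⊢; linarith
  set m : ℝ := σS / (1 - ε) with hm
  have hm0 : 0 ≤ m := div_nonneg h3 hε.le
  have hσSm : (1 - ε) * m = σS := by
    rw [hm]; field_simp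
  -- evaluate the tsum
  have hsum : (∑' n : ℕ, Real.exp (-m) * m ^ n / n.factorial * max 0 (1 - (1 - ε) * n))
      = Real.exp (-m) * (1 + ε * m) := by
    rw [tsum_eq_sum (s := {0, 1})]
    · simp only [Finset.sum_insert (by norm_num : (0:ℕ) ∉ ({1} : Finset ℕ)),
        Finset.sum_singleton]
      norm_num
      rw [max_eq_right (by linarith : (0:ℝ) ≤ ε)]
      ring
    · intro n hn
      have h2n : 2 ≤ n := by
        rcases n with _ | _ | n
        · simp at hn
        · simp at hn
        · omega
      have hmax : max 0 (1 - (1 - ε) * n) = 0 := by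
        apply max_eq_left
        have : (2:ℝ) ≤ n := by exact_mod_cast h2n
        nlinarith
      rw [hmax, mul_zero]
  rw [hsum]
  have hexpeq : Real.exp (-(σ - σS)) * Real.exp (-m) = Real.exp (-σ) * Real.exp (-(ε * m)) := by
    rw [← Real.exp_add, ← Real.exp_add]
    congr 1
    linarith [hσSm]
  have key : Real.exp (-(σ - σS)) * (Real.exp (-m) * (1 + ε * m))
      = Real.exp (-σ) * ((1 + ε * m) * Real.exp (-(ε * m))) := by
    calc Real.exp (-(σ - σS)) * (Real.exp (-m) * (1 + ε * m))
        = (Real.exp (-(σ - σS)) * Real.exp (-m)) * (1 + ε * m) := by ring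
      _ = (Real.exp (-σ) * Real.exp (-(ε * m))) * (1 + ε * m) := by rw [hexpeq]
      _ = Real.exp (-σ) * ((1 + ε * m) * Real.exp (-(ε * m))) := by ring
  rw [key]
  have hσS : ε / 2 ≤ σS := by linarith
  have hmge : σS ≤ m := by
    rw [hm, le_div_iff₀ hε]; nlinarith
  have hxge : x0 ≤ ε * m := by
    rw [hx0def]; nlinarith
  have hmono := aux_mono x0 (ε * m) hx0.le hxge
  have hσ0 : 0 ≤ σ := by nlinarith
  have hconc := aux_concave σ hσ0 h2
  have h1e : 1 / Real.exp 1 ≤ Real.exp (-σ) := by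
    rw [show (1:ℝ) / Real.exp 1 = Real.exp (-1) from by rw [Real.exp_neg]; ring]
    exact Real.exp_le_exp.2 (by linarith)
  have hstep : Real.exp (-σ) * ((1 + ε * m) * Real.exp (-(ε * m)))
      ≤ Real.exp (-σ) * ((1 + x0) * Real.exp (-x0)) :=
    mul_le_mul_of_nonneg_left hmono (Real.exp_pos _).le
  -- main estimate
  have hA := Real.exp_pos (-σ)
  have hB : 0 < (1 + x0) * Real.exp (-x0) := by positivity
  have s1 : (1 / Real.exp 1) * (1 - (1 + x0) * Real.exp (-x0))
      ≤ Real.exp (-σ) * (1 - (1 + x0) * Real.exp (-x0)) :=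
    mul_le_mul_of_nonneg_right h1e hc.le
  have s2 : (1 / Real.exp 1) * (1 - (1 + x0) * Real.exp (-x0)) * σ
      ≤ (1 / Real.exp 1) * (1 - (1 + x0) * Real.exp (-x0)) * 1 := by
    apply mul_le_mul_of_nonneg_left h2
    positivity
  have hmain : (1 - 1 / Real.exp 1 + (1 - (1 + x0) * Real.exp (-x0)) / Real.exp 1) * σ
      ≤ 1 - Real.exp (-σ) * ((1 + x0) * Real.exp (-x0)) := by
    have e1 : (1 - (1 + x0) * Real.exp (-x0)) / Real.exp 1
        = (1 / Real.exp 1) * (1 - (1 + x0) * Real.exp (-x0)) := by ring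
    rw [e1]
    nlinarith [hconc, s1, s2]
  linarith [hstep, hmain]
end

section
/- Let I and K be finite sets, let y : I → ℝ satisfy y_i ≥ 0 for all i, let γ : K → ℝ satisfy γ_k ≥ 0 for all k, and assume Γ := ∑_{k∈K} γ_k > 0. For each k ∈ K let N(k) ⊆ I be a subset, and let β and Y be real numbers such that ∑_{i∈N(k)} y_i ≥ β for every k ∈ K and ∑_{i∈I} y_i ≤ Y. Then the set O := { i ∈ I : ∑_{k∈K, i∈N(k)} γ_k ≥ Γ/2 } satisfies ∑_{i∈O} y_i ≥ 2β − Y. -/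
open Classical in
/-- Double-counting lemma for the core set: if every neighborhood `N k` carries
`y`-mass at least `β` and the total `y`-mass is at most `Y`, then the set `O` of
elements receiving at least half the total `γ`-weight has `y`-mass at least `2β − Y`. -/
theorem stmt_7 {I K : Type*} [Fintype I] [Fintype K]
    (y : I → ℝ) (hy : ∀ i, 0 ≤ y i)
    (γ : K → ℝ) (hγ : ∀ k, 0 ≤ γ k) (hΓ : 0 < ∑ k, γ k)
    (N : K → Finset I) (β Y : ℝ)
    (hβ : ∀ k, β ≤ ∑ i ∈ N k, y i)
    (hY : ∑ i, y i ≤ Y) :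
    2 * β - Y ≤
      ∑ i ∈ Finset.univ.filter
          (fun i : I =>
            (∑ k, γ k) / 2 ≤ ∑ k ∈ Finset.univ.filter (fun k : K => i ∈ N k), γ k),
        y i := by
  classical
  set Γ := ∑ k, γ k with hΓdef
  set w : I → ℝ := fun i => ∑ k ∈ Finset.univ.filter (fun k : K => i ∈ N k), γ k with hw
  set O : Finset I := Finset.univ.filter (fun i : I => Γ / 2 ≤ w i) with hO
  set S := ∑ i ∈ O, y i with hS
  -- step 1: Γ * β ≤ ∑ i, w i * y i
  have h1 : Γ * β ≤ ∑ k, γ k * ∑ i ∈ N k, y i := by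
    rw [hΓdef, Finset.sum_mul]
    exact Finset.sum_le_sum fun k _ => mul_le_mul_of_nonneg_left (hβ k) (hγ k)
  have h2 : ∑ k, γ k * ∑ i ∈ N k, y i = ∑ i, w i * y i := by
    have : ∀ k : K, γ k * ∑ i ∈ N k, y i
        = ∑ i : I, if i ∈ N k then γ k * y i else 0 := by
      intro k
      rw [Finset.mul_sum, ← Finset.sum_filter]
      congr 1
      ext i; simp
    simp_rw [this, hw, Finset.sum_mul, Finset.sum_filter]
    rw [Finset.sum_comm]
  -- bounds on w
  have hwΓ : ∀ i, w i ≤ Γ := fun i =>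
    Finset.sum_le_sum_of_subset_of_nonneg (Finset.filter_subset _ _) (fun k _ _ => hγ k)
  have hw0 : ∀ i, 0 ≤ w i := fun i => Finset.sum_nonneg fun k _ => hγ k
  -- step 2: split
  have hsplit : ∑ i, w i * y i = ∑ i ∈ O, w i * y i + ∑ i ∈ Finset.univ.filter (fun i => ¬ (Γ/2 ≤ w i)), w i * y i := by
    rw [hO, Finset.sum_filter_add_sum_filter_not]
  have hOb : ∑ i ∈ O, w i * y i ≤ Γ * S := by
    rw [hS, Finset.mul_sum]
    exact Finset.sum_le_sum fun i _ => mul_le_mul_of_nonneg_right (hwΓ i) (hy i)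
  have hcomp : ∑ i ∈ Finset.univ.filter (fun i => ¬ (Γ/2 ≤ w i)), w i * y i
      ≤ Γ/2 * (Y - S) := by
    have h3 : ∑ i ∈ Finset.univ.filter (fun i => ¬ (Γ/2 ≤ w i)), w i * y i
        ≤ ∑ i ∈ Finset.univ.filter (fun i => ¬ (Γ/2 ≤ w i)), Γ/2 * y i :=
      Finset.sum_le_sum fun i hi => by
        have := (Finset.mem_filter.mp hi).2
        exact mul_le_mul_of_nonneg_right (le_of_not_ge this) (hy i)
    have h4 : ∑ i ∈ Finset.univ.filter (fun i => ¬ (Γ/2 ≤ w i)), y i ≤ Y - S := by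
      have := Finset.sum_filter_add_sum_filter_not Finset.univ (fun i => Γ/2 ≤ w i) y
      have hle : S + ∑ i ∈ Finset.univ.filter (fun i => ¬ (Γ/2 ≤ w i)), y i ≤ Y := by
        rw [hS, hO, this]; exact hY
      linarith
    calc _ ≤ ∑ i ∈ Finset.univ.filter (fun i => ¬ (Γ/2 ≤ w i)), Γ/2 * y i := h3
      _ = Γ/2 * ∑ i ∈ Finset.univ.filter (fun i => ¬ (Γ/2 ≤ w i)), y i := by
          rw [Finset.mul_sum]
      _ ≤ Γ/2 * (Y - S) := by
          exact mul_le_mul_of_nonneg_left h4 (by linarith)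
  have key : Γ * β ≤ Γ * S + Γ/2 * (Y - S) := by
    calc Γ * β ≤ ∑ i, w i * y i := h1.trans_eq h2
      _ = _ := hsplit
      _ ≤ _ := add_le_add hOb hcomp
  -- conclude
  have : Γ * (2 * β - Y) ≤ Γ * S := by nlinarith
  have := le_of_mul_le_mul_left this hΓ
  exact this
end

section
/- Let ε, η, δ, c ∈ (0, 1), let μ > 0, let λ satisfy 0 < λ ≤ ε²μ, and let Γ ≥ η·μ. Set r := μ + λ, τ* := 1/(δΓ), c'' := c · exp(−(1 + η + ε²)/(δη)), and c̃ := c''η/(2 + (1 − c'')η). Then ∫₀^∞ r e^{−r t} · exp(−(1 − c·𝟙[t ≥ τ*])·t·Γ) dt ≥ (1 + c̃) · r/(r + Γ). -/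
open MeasureTheory Set Real Filter Topology

lemma exp_int_Ioi (rr k a : ℝ) (hk : 0 < k) :
    ∫ x in Set.Ioi a, rr * Real.exp (-k * x) = rr / k * Real.exp (-k * a) := by
  have hderiv : ∀ x ∈ Set.Ici a,
      HasDerivAt (fun x : ℝ => -(rr / k) * Real.exp (-k * x)) (rr * Real.exp (-k * x)) x := by
    intro x _
    have h1 : HasDerivAt (fun y : ℝ => -k * y) (-k * 1) x := (hasDerivAt_id x).const_mul (-k)
    have h2 := (h1.exp).const_mul (-(rr / k))
    refine h2.congr_deriv ?_
    field_simp
  have hint : IntegrableOn (fun x : ℝ => rr * Real.exp (-k * x)) (Set.Ioi a) :=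
    (exp_neg_integrableOn_Ioi a hk).const_mul rr
  have htend : Tendsto (fun x : ℝ => -(rr / k) * Real.exp (-k * x)) atTop (𝓝 (-(rr / k) * 0)) := by
    refine Tendsto.const_mul _ ?_
    exact Real.tendsto_exp_atBot.comp (tendsto_id.const_mul_atTop_of_neg (by linarith))
  have h := integral_Ioi_of_hasDerivAt_of_tendsto' hderiv hint (by simpa using htend)
  rw [h]
  ring

lemma exp_int_Ici (rr k a : ℝ) (hk : 0 < k) :
    ∫ x in Set.Ici a, rr * Real.exp (-k * x) = rr / k * Real.exp (-k * a) := by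
  rw [MeasureTheory.integral_Ici_eq_integral_Ioi]; exact exp_int_Ioi rr k a hk


set_option maxHeartbeats 1000000 in
/-- With `r = μ + λ`, `τ* = 1/(δΓ)`, `c'' = c·exp(−(1+η+ε²)/(δη))` and
`c̃ = c''η/(2+(1−c'')η)`, for `0 < λ ≤ ε²μ` and `Γ ≥ ημ`,
`E[exp(−(1 − c·𝟙[τ ≥ τ*])·τ·Γ)] ≥ (1 + c̃)·r/(r+Γ)` for `τ ~ Exp(r)`. -/
theorem stmt_10 (ε η δ c μ lam Γ : ℝ)
    (hε : 0 < ε ∧ ε < 1) (hη : 0 < η ∧ η < 1) (hδ : 0 < δ ∧ δ < 1) (hc : 0 < c ∧ c < 1)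
    (hμ : 0 < μ) (hlam0 : 0 < lam) (hlam : lam ≤ ε ^ 2 * μ) (hΓ : η * μ ≤ Γ)
    (r τstar c'' ctilde : ℝ)
    (hrdef : r = μ + lam)
    (hτdef : τstar = 1 / (δ * Γ))
    (hc''def : c'' = c * Real.exp (-(1 + η + ε ^ 2) / (δ * η)))
    (hctdef : ctilde = c'' * η / (2 + (1 - c'') * η)) :
    (1 + ctilde) * (r / (r + Γ)) ≤
      ∫ t in Set.Ici (0 : ℝ),
        r * Real.exp (-r * t) *
          Real.exp (-(1 - c * (if τstar ≤ t then 1 else 0)) * t * Γ) := by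
  obtain ⟨hε0, hε1⟩ := hε
  obtain ⟨hη0, hη1⟩ := hη
  obtain ⟨hδ0, hδ1⟩ := hδ
  obtain ⟨hc0, hc1⟩ := hc
  have hΓ0 : 0 < Γ := lt_of_lt_of_le (by positivity) hΓ
  have hr0 : 0 < r := by rw [hrdef]; positivity
  set A : ℝ := r + Γ with hA
  set B : ℝ := r + (1 - c) * Γ with hB
  have hA0 : 0 < A := by rw [hA]; positivity
  have hB0 : 0 < B := by
    rw [hB]
    have h1c : 0 < 1 - c := by linarith
    positivity
  have hBA : B ≤ A := by rw [hA, hB]; nlinarith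
  have hτ0 : 0 < τstar := by rw [hτdef]; positivity
  -- rewrite the integrand
  have hEq : ∀ t : ℝ,
      r * Real.exp (-r * t) * Real.exp (-(1 - c * (if τstar ≤ t then 1 else 0)) * t * Γ)
        = if τstar ≤ t then r * Real.exp (-B * t) else r * Real.exp (-A * t) := by
    intro t
    by_cases h : τstar ≤ t
    · simp only [if_pos h, mul_assoc, ← Real.exp_add]
      congr 2
      rw [hB]; ring
    · simp only [if_neg h, mul_assoc, ← Real.exp_add]
      congr 2
      rw [hA]; ring
  simp only [hEq]
  -- split the integral
  have hdisj : Disjoint (Set.Ioo (0:ℝ) τstar) (Set.Ici τstar) :=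
    Set.disjoint_left.mpr fun x hx hx' => absurd hx.2 (not_lt.mpr hx')
  have hintA : IntegrableOn (fun t : ℝ => r * Real.exp (-A * t)) (Set.Ioi 0) :=
    (exp_neg_integrableOn_Ioi 0 hA0).const_mul r
  have hintAIci : IntegrableOn (fun t : ℝ => r * Real.exp (-A * t)) (Set.Ici τstar) :=
    (integrableOn_Ici_iff_integrableOn_Ioi).mpr ((exp_neg_integrableOn_Ioi τstar hA0).const_mul r)
  have hintB : IntegrableOn (fun t : ℝ => r * Real.exp (-B * t)) (Set.Ici τstar) :=
    (integrableOn_Ici_iff_integrableOn_Ioi).mpr ((exp_neg_integrableOn_Ioi τstar hB0).const_mul r)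
  set g : ℝ → ℝ := fun t => if τstar ≤ t then r * Real.exp (-B * t) else r * Real.exp (-A * t)
    with hg
  have hg1 : Set.EqOn (fun t : ℝ => r * Real.exp (-A * t)) g (Set.Ioo 0 τstar) := by
    intro t ht
    simp only [hg]
    rw [if_neg (not_le.mpr ht.2)]
  have hg2 : Set.EqOn (fun t : ℝ => r * Real.exp (-B * t)) g (Set.Ici τstar) := by
    intro t ht
    simp only [hg]
    rw [if_pos (Set.mem_Ici.mp ht)]
  have hgint1 : IntegrableOn g (Set.Ioo 0 τstar) :=
    (hintA.mono_set Set.Ioo_subset_Ioi_self).congr_fun hg1 measurableSet_Ioo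
  have hgint2 : IntegrableOn g (Set.Ici τstar) := hintB.congr_fun hg2 measurableSet_Ici
  have hsplit : ∫ t in Set.Ici (0:ℝ), g t
      = (∫ t in Set.Ioo 0 τstar, g t) + ∫ t in Set.Ici τstar, g t := by
    rw [MeasureTheory.integral_Ici_eq_integral_Ioi,
      ← MeasureTheory.setIntegral_union hdisj measurableSet_Ici hgint1 hgint2,
      Set.Ioo_union_Ici_eq_Ioi hτ0]
  have hv2 : ∫ t in Set.Ici τstar, g t = r / B * Real.exp (-B * τstar) := by
    rw [← MeasureTheory.setIntegral_congr_fun measurableSet_Ici hg2]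
    exact exp_int_Ici r B τstar hB0
  have hAsplit : (∫ t in Set.Ioi (0:ℝ), r * Real.exp (-A * t))
      = (∫ t in Set.Ioo 0 τstar, r * Real.exp (-A * t))
        + ∫ t in Set.Ici τstar, r * Real.exp (-A * t) := by
    rw [← MeasureTheory.setIntegral_union hdisj measurableSet_Ici
      (hintA.mono_set Set.Ioo_subset_Ioi_self) hintAIci, Set.Ioo_union_Ici_eq_Ioi hτ0]
  have hv1 : ∫ t in Set.Ioo 0 τstar, g t
      = r / A * Real.exp (-A * 0) - r / A * Real.exp (-A * τstar) := by
    rw [← MeasureTheory.setIntegral_congr_fun measurableSet_Ioo hg1]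
    have h1 := exp_int_Ioi r A 0 hA0
    have h2 := exp_int_Ici r A τstar hA0
    rw [hAsplit, h2] at h1
    linarith
  rw [hsplit, hv1, hv2]
  set X : ℝ := Real.exp (-A * τstar) with hX
  set Y : ℝ := Real.exp (-B * τstar) with hYd
  have hX0 : 0 < X := Real.exp_pos _
  have hXY : X ≤ Y := by
    rw [hX, hYd]
    apply Real.exp_le_exp.mpr
    nlinarith
  clear hsplit hv1 hv2 hAsplit hEq hdisj hintA hintAIci hintB hg1 hg2 hgint1 hgint2 hg
  clear_value g
  clear g
  clear_value A B X Y
  -- key quantitative bounds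
  have hrle : r ≤ (1 + ε ^ 2) * μ := by nlinarith
  have hηr : η * r ≤ (1 + ε ^ 2) * Γ := by nlinarith
  have hAτ : A * τstar ≤ (1 + η + ε ^ 2) / (δ * η) := by
    rw [hτdef, hA, mul_one_div, div_le_div_iff₀ (by positivity) (by positivity)]
    nlinarith [mul_le_mul_of_nonneg_left hηr hδ0.le, mul_pos hδ0 hΓ0]
  have hE : Real.exp (-(1 + η + ε ^ 2) / (δ * η)) ≤ X := by
    rw [hX]
    apply Real.exp_le_exp.mpr
    rw [neg_div, neg_mul, neg_le_neg_iff]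
    exact hAτ
  have hc''X : c'' ≤ c * X := by
    rw [hc''def]; exact mul_le_mul_of_nonneg_left hE hc0.le
  have hc''0 : 0 < c'' := by rw [hc''def]; positivity
  have hc''c : c'' ≤ c := by
    have harg : -(1 + η + ε ^ 2) / (δ * η) ≤ 0 :=
      div_nonpos_iff.mpr (Or.inr ⟨by nlinarith, by positivity⟩)
    have := Real.exp_le_one_iff.mpr harg
    rw [hc''def]
    nlinarith
  have hD0 : 0 < 2 + (1 - c'') * η := by nlinarith
  have hε2 : ε ^ 2 ≤ 1 := by nlinarith
  have hr2Γ : r * η ≤ 2 * Γ := by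
    nlinarith [hηr, mul_le_mul_of_nonneg_right hε2 hΓ0.le]
  have hBη : B * η ≤ Γ * (2 + (1 - c) * η) := by rw [hB]; nlinarith
  -- key: ctilde * B ≤ c * X * Γ
  have hkey : ctilde * B ≤ c * X * Γ := by
    rw [hctdef, div_mul_eq_mul_div, div_le_iff₀ hD0]
    have h1 : c'' * (B * η) ≤ c'' * (Γ * (2 + (1 - c) * η)) :=
      mul_le_mul_of_nonneg_left hBη hc''0.le
    have hcc : (1 : ℝ) - c ≤ 1 - c'' := by linarith
    have h2 : Γ * (2 + (1 - c) * η) ≤ Γ * (2 + (1 - c'') * η) := by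
      nlinarith [mul_le_mul_of_nonneg_left (mul_le_mul_of_nonneg_right hcc hη0.le) hΓ0.le]
    have h2' : c'' * (Γ * (2 + (1 - c) * η)) ≤ c'' * (Γ * (2 + (1 - c'') * η)) :=
      mul_le_mul_of_nonneg_left h2 hc''0.le
    have h3 : c'' * (Γ * (2 + (1 - c'') * η)) ≤ (c * X) * (Γ * (2 + (1 - c'') * η)) := by
      apply mul_le_mul_of_nonneg_right hc''X
      positivity
    calc c'' * η * B = c'' * (B * η) := by ring
      _ ≤ c'' * (Γ * (2 + (1 - c) * η)) := h1
      _ ≤ c'' * (Γ * (2 + (1 - c'') * η)) := h2'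
      _ ≤ (c * X) * (Γ * (2 + (1 - c'') * η)) := h3
      _ = c * X * Γ * (2 + (1 - c'') * η) := by ring
  -- final inequality
  have hmain : ctilde * (r / A) ≤ r / B * X - r / A * X := by
    have hAne := hA0.ne'
    have hBne := hB0.ne'
    have hAB : A - B = c * Γ := by rw [hA, hB]; ring
    have e1 : r / B * X - r / A * X = r * (c * Γ) * X / (A * B) := by
      rw [← hAB]
      field_simp
    rw [e1, ← mul_div_assoc, div_le_div_iff₀ hA0 (by positivity : (0:ℝ) < A * B)]
    have h4 := mul_le_mul_of_nonneg_left hkey (by positivity : (0:ℝ) ≤ r * A)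
    nlinarith [h4]
  have hY : r / B * X ≤ r / B * Y := mul_le_mul_of_nonneg_left hXY (by positivity)
  have hexp0 : Real.exp (-A * 0) = 1 := by norm_num
  rw [hexp0]
  nlinarith [hmain, hY]
end

section
/- The function f(x) := x/(x + 1 − e^{−x}) is strictly increasing on (0, ∞), satisfies f(x) > 1/2 for every x > 0, and f(x) → 1/2 as x → 0 from the right. -/
open Real Filter Set

lemma aux_denom_pos {x : ℝ} (hx : 0 < x) : 0 < x + 1 - Real.exp (-x) := by
  have h : Real.exp (-x) < 1 := Real.exp_lt_one_iff.mpr (by linarith)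
  linarith

lemma aux_slope {a b : ℝ} (ha : 0 < a) (hab : a < b) :
    (1 - Real.exp (-b)) / b < (1 - Real.exp (-a)) / a := by
  have h := strictConvexOn_exp.secant_strict_mono (a := 0) (x := -b) (y := -a)
    (Set.mem_univ _) (Set.mem_univ _) (Set.mem_univ _)
    (by intro h; apply absurd (neg_eq_zero.mp h); linarith)
    (by intro h; apply absurd (neg_eq_zero.mp h); linarith)
    (by linarith)
  rw [Real.exp_zero, sub_zero, sub_zero] at h
  have e1 : (Real.exp (-b) - 1) / (-b) = (1 - Real.exp (-b)) / b := by
    rw [← neg_div_neg_eq]; ring_nf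
  have e2 : (Real.exp (-a) - 1) / (-a) = (1 - Real.exp (-a)) / a := by
    rw [← neg_div_neg_eq]; ring_nf
  rwa [e1, e2] at h

/-- The function `f(x) = x/(x + 1 − e^{−x})` is strictly increasing on `(0, ∞)`,
exceeds `1/2` for every `x > 0`, and tends to `1/2` as `x → 0⁺`. -/
theorem stmt_11 :
    StrictMonoOn (fun x : ℝ => x / (x + 1 - Real.exp (-x))) (Set.Ioi 0) ∧
    (∀ x : ℝ, 0 < x → 1 / 2 < x / (x + 1 - Real.exp (-x))) ∧
    Filter.Tendsto (fun x : ℝ => x / (x + 1 - Real.exp (-x)))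
      (nhdsWithin 0 (Set.Ioi 0)) (nhds (1 / 2)) := by
  refine ⟨?_, ?_, ?_⟩
  · intro a ha b hb hab
    simp only [Set.mem_Ioi] at ha hb
    have hda := aux_denom_pos ha
    have hdb := aux_denom_pos hb
    rw [div_lt_div_iff₀ hda hdb]
    have key := aux_slope ha hab
    rw [div_lt_div_iff₀ (by linarith) ha] at key
    nlinarith
  · intro x hx
    have hd := aux_denom_pos hx
    rw [div_lt_div_iff₀ (by norm_num) hd]
    have h := Real.add_one_lt_exp (x := -x) (by linarith)
    linarith
  · have hder : HasDerivAt (fun x : ℝ => 1 - Real.exp (-x)) 1 0 := by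
      have h : HasDerivAt (fun x : ℝ => Real.exp (-x)) (-1) 0 := by
        simpa [Function.comp_def] using (Real.hasDerivAt_exp (-0)).comp 0 (hasDerivAt_neg 0)
      simpa [Pi.sub_def] using (hasDerivAt_const (0:ℝ) (1:ℝ)).sub h
    have hslope : Filter.Tendsto (fun x : ℝ => (1 - Real.exp (-x)) / x)
        (nhdsWithin 0 (Set.Ioi 0)) (nhds 1) := by
      have := hasDerivAt_iff_tendsto_slope.mp hder
      have h2 : Filter.Tendsto (slope (fun x : ℝ => 1 - Real.exp (-x)) 0)
          (nhdsWithin 0 (Set.Ioi 0)) (nhds 1) :=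
        this.mono_left (nhdsWithin_mono 0 (fun x hx => ne_of_gt hx))
      refine h2.congr' ?_
      filter_upwards [self_mem_nhdsWithin] with x hx
      simp [slope_def_field, div_eq_div_iff]
    have hlim : Filter.Tendsto (fun x : ℝ => 1 / (1 + (1 - Real.exp (-x)) / x))
        (nhdsWithin 0 (Set.Ioi 0)) (nhds (1 / 2)) := by
      have : Filter.Tendsto (fun x : ℝ => 1 + (1 - Real.exp (-x)) / x)
          (nhdsWithin 0 (Set.Ioi 0)) (nhds 2) := by
        have := tendsto_const_nhds.add hslope (f := fun _ : ℝ => (1:ℝ))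
        norm_num at this ⊢
        exact this
      exact (tendsto_const_nhds.div this (by norm_num))
    refine hlim.congr' ?_ |>.mono_left le_rfl
    filter_upwards [self_mem_nhdsWithin] with x hx
    have hx' : (0:ℝ) < x := hx
    have hd := aux_denom_pos hx'
    rw [one_add_div hx'.ne', one_div_div]
    ring_nf
end

section
/- Let ε ∈ (0, 0.1), let I be a finite set, let x : I → ℝ and r : I → ℝ satisfy x_i ≥ 0 and r_i ≥ 0 for all i ∈ I, and let γ > 0 with ∑_{i∈I} x_i ≤ (1 − ε)·γ. Then ∫₀^∞ (1 − exp(−(∑_{i∈I, r_i ≥ w} x_i)/γ)) dw ≥ (1 − 1/e + g(1 − ε)) · (∑_{i∈I} x_i r_i)/γ, where g(z) := (1 − e^{−z})/z − (1 − 1/e). -/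
open MeasureTheory

/-- Chord inequality for the concave function `1 - exp (-s)` on `[0, a]`. -/
lemma chord_aux (a s : ℝ) (ha : 0 < a) (hs0 : 0 ≤ s) (hsa : s ≤ a) :
    (1 - Real.exp (-a)) / a * s ≤ 1 - Real.exp (-s) := by
  have ha' : a ≠ 0 := ha.ne'
  have hta : s / a ≤ 1 := (div_le_one ha).2 hsa
  have ht0 : 0 ≤ s / a := div_nonneg hs0 ha.le
  have hconv := convexOn_exp.2 (Set.mem_univ (0:ℝ)) (Set.mem_univ (-a))
    (by linarith : (0:ℝ) ≤ 1 - s / a) ht0 (by ring)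
  have hxx : (1 - s / a) • (0:ℝ) + (s / a) • (-a) = -s := by
    simp only [smul_eq_mul, mul_zero, zero_add]; field_simp
  rw [hxx, smul_eq_mul, smul_eq_mul, Real.exp_zero, mul_one] at hconv
  have hk : (1 - Real.exp (-a)) / a * s = s / a * (1 - Real.exp (-a)) := by
    field_simp
  rw [hk]; nlinarith [hconv]

open Classical in
/-- If `∑ x_i ≤ (1 − ε)γ`, then
`∫₀^∞ (1 − exp(−(∑_{i : r_i ≥ w} x_i)/γ)) dw ≥ (1 − 1/e + g(1 − ε)) · (∑ x_i r_i)/γ`,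
where `g(z) = (1 − e^{−z})/z − (1 − 1/e)`. -/
theorem stmt_15 (ε : ℝ) (hε0 : 0 < ε) (hε1 : ε < 0.1) {I : Type*} [Fintype I]
    (x r : I → ℝ) (hx : ∀ i, 0 ≤ x i) (hr : ∀ i, 0 ≤ r i)
    (γ : ℝ) (hγ : 0 < γ) (hsat : ∑ i, x i ≤ (1 - ε) * γ) :
    (1 - 1 / Real.exp 1 +
        ((1 - Real.exp (-(1 - ε))) / (1 - ε) - (1 - 1 / Real.exp 1))) *
      ((∑ i, x i * r i) / γ) ≤
    ∫ w in Set.Ici (0 : ℝ),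
      (1 - Real.exp (-(∑ i ∈ Finset.univ.filter (fun i : I => w ≤ r i), x i) / γ)) := by
  set c : ℝ := (1 - Real.exp (-(1 - ε))) / (1 - ε) with hc
  have hconst : (1 - 1 / Real.exp 1 + (c - (1 - 1 / Real.exp 1))) = c := by ring
  rw [hconst]
  set S : ℝ → ℝ := fun w => ∑ i, if w ≤ r i then x i else 0 with hS
  have hSfilter : ∀ w, (∑ i ∈ Finset.univ.filter (fun i : I => w ≤ r i), x i) = S w := by
    intro w; rw [hS]; simp [Finset.sum_filter]
  have hS0 : ∀ w, 0 ≤ S w := by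
    intro w
    apply Finset.sum_nonneg
    intro i _
    split
    · exact hx i
    · exact le_rfl
  have hSle : ∀ w, S w ≤ (1 - ε) * γ := by
    intro w
    refine le_trans (Finset.sum_le_sum fun i _ => ?_) hsat
    split <;> simp [hx i]
  have hε' : 0 < 1 - ε := by norm_num at hε1 ⊢; linarith
  -- measurability of S
  have hSmeas : Measurable S := by
    apply Finset.measurable_sum
    intro i _
    have : (fun w : ℝ => if w ≤ r i then x i else 0)
        = (Set.Iic (r i)).indicator (fun _ => x i) := by
      ext w; simp [Set.indicator_apply]
    rw [this]
    exact (measurable_const).indicator measurableSet_Iic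
  -- bound on support
  set R : ℝ := ∑ i, r i with hR
  have hR0 : 0 ≤ R := Finset.sum_nonneg fun i _ => hr i
  have hSzero : ∀ w, R < w → S w = 0 := by
    intro w hw
    apply Finset.sum_eq_zero
    intro i _
    have : r i ≤ R := Finset.single_le_sum (fun j _ => hr j) (Finset.mem_univ i)
    rw [if_neg (by linarith)]
  set f : ℝ → ℝ := fun w => 1 - Real.exp (-S w / γ) with hf
  have hf0 : ∀ w, 0 ≤ f w := by
    intro w
    have h1 : -S w / γ ≤ 0 :=
      div_nonpos_of_nonpos_of_nonneg (neg_nonpos.2 (hS0 w)) hγ.le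
    have h2 : Real.exp (-S w / γ) ≤ 1 := Real.exp_le_one_iff.2 h1
    simp only [hf]; linarith
  have hf1 : ∀ w, f w ≤ 1 := by
    intro w; have := Real.exp_pos (-S w / γ); simp [hf]; linarith
  have hfmeas : Measurable f := by
    apply Measurable.const_sub
    exact Real.measurable_exp.comp ((hSmeas.neg).div_const γ)
  -- integrability of f on Ici 0
  have hfint : IntegrableOn f (Set.Ici 0) := by
    apply Integrable.mono' (g := (Set.Icc (0:ℝ) R).indicator (fun _ => (1:ℝ)))
    · exact (integrable_indicator_iff measurableSet_Icc).2
        (integrableOn_const measure_Icc_lt_top.ne)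
    · exact (hfmeas.aestronglyMeasurable).restrict
    · rw [ae_restrict_iff' measurableSet_Ici]
      filter_upwards with w hw
      rcases le_or_gt w R with h | h
      · rw [Set.indicator_of_mem (Set.mem_Icc.2 ⟨hw, h⟩)]
        rw [Real.norm_eq_abs, abs_of_nonneg (hf0 w)]
        exact hf1 w
      · have hfw : f w = 0 := by simp [hf, hSzero w h]
        rw [Real.norm_eq_abs, hfw, abs_zero]
        exact Set.indicator_nonneg (fun _ _ => zero_le_one) w
  -- lower step function and its integral
  have hterm_int : ∀ i : I, IntegrableOn (fun w : ℝ => if w ≤ r i then x i else 0)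
      (Set.Ici 0) := by
    intro i
    have heq : (fun w : ℝ => if w ≤ r i then x i else 0)
        = (Set.Iic (r i)).indicator (fun _ => x i) := by
      ext w; simp [Set.indicator_apply]
    rw [heq]
    rw [IntegrableOn, integrable_indicator_iff measurableSet_Iic]
    refine (integrableOn_const ?_)
    rw [Measure.restrict_apply measurableSet_Iic, Set.Iic_inter_Ici]
    exact measure_Icc_lt_top.ne
  have hSint : IntegrableOn S (Set.Ici 0) :=
    integrable_finset_sum _ (fun i _ => hterm_int i)
  have hint_term : ∀ i : I, ∫ w in Set.Ici (0:ℝ), (if w ≤ r i then x i else 0)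
      = x i * r i := by
    intro i
    have heq : (fun w : ℝ => if w ≤ r i then x i else 0)
        = (Set.Iic (r i)).indicator (fun _ => x i) := by
      ext w; simp [Set.indicator_apply]
    rw [heq, setIntegral_indicator measurableSet_Iic]
    have : Set.Ici (0:ℝ) ∩ Set.Iic (r i) = Set.Icc 0 (r i) := Set.Ici_inter_Iic
    rw [this, setIntegral_const]
    simp [Real.volume_Icc, ENNReal.toReal_ofReal (hr i), mul_comm, hr i]
  have hSintegral : ∫ w in Set.Ici (0:ℝ), S w = ∑ i, x i * r i := by
    rw [hS]
    rw [integral_finset_sum _ (fun i _ => hterm_int i)]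
    exact Finset.sum_congr rfl fun i _ => hint_term i
  -- pointwise bound
  have hpw : ∀ w ∈ Set.Ici (0:ℝ), c / γ * S w ≤ f w := by
    intro w _
    have h1 : S w / γ ≤ 1 - ε := by
      rw [div_le_iff₀ hγ]; exact hSle w
    have h2 : 0 ≤ S w / γ := div_nonneg (hS0 w) hγ.le
    have := chord_aux (1 - ε) (S w / γ) hε' h2 h1
    have hrw : -(S w / γ) = -S w / γ := by ring
    rw [hrw] at this
    calc c / γ * S w = c * (S w / γ) := by field_simp
      _ ≤ f w := this
  have hcnn : 0 ≤ c := by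
    apply div_nonneg _ hε'.le
    have : Real.exp (-(1-ε)) ≤ 1 := by rw [Real.exp_le_one_iff]; linarith
    linarith
  calc c * ((∑ i, x i * r i) / γ)
      = ∫ w in Set.Ici (0:ℝ), c / γ * S w := by
        rw [integral_const_mul, hSintegral]; ring
    _ ≤ ∫ w in Set.Ici (0:ℝ), f w := by
        apply setIntegral_mono_on (hSint.const_mul _) hfint measurableSet_Ici hpw
    _ = ∫ w in Set.Ici (0:ℝ),
          (1 - Real.exp (-(∑ i ∈ Finset.univ.filter (fun i : I => w ≤ r i), x i) / γ)) := by
        congr 1; ext w; rw [hSfilter w]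
end

section
/- For every ε ∈ (0, 0.1), every s ∈ [0, 1], and every s₁ with (ε/2)·s ≤ s₁ ≤ s: 1 − exp(−s₁/(2 − 1/e) − (s − s₁)/2) ≥ (1 − exp(−(1/2 + (1/(2 − 1/e) − 1/2)·ε/2))) · s. -/
/-- Sharpened concavity step for abundant types: for `ε ∈ (0, 0.1)`, `s ∈ [0, 1]` and
`(ε/2)s ≤ s₁ ≤ s`,
`1 − exp(−s₁/(2 − 1/e) − (s − s₁)/2) ≥ (1 − exp(−(1/2 + (1/(2 − 1/e) − 1/2)·ε/2)))·s`. -/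
theorem stmt_18 (ε s s₁ : ℝ) (hε0 : 0 < ε) (hε1 : ε < 0.1)
    (hs0 : 0 ≤ s) (hs1 : s ≤ 1)
    (hs₁l : (ε / 2) * s ≤ s₁) (hs₁u : s₁ ≤ s) :
    (1 - Real.exp (-(1 / 2 + (1 / (2 - 1 / Real.exp 1) - 1 / 2) * (ε / 2)))) * s ≤
      1 - Real.exp (-(s₁ / (2 - 1 / Real.exp 1)) - (s - s₁) / 2) := by
  set c : ℝ := 1 / (2 - 1 / Real.exp 1) with hc
  have he1 : (1 : ℝ) < Real.exp 1 := by have := Real.add_one_le_exp 1; linarith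
  have hd : (0 : ℝ) < 2 - 1 / Real.exp 1 := by
    have : 1 / Real.exp 1 < 1 := by
      rw [div_lt_one (lt_trans one_pos he1)]; exact he1
    linarith
  have hc2 : (1 : ℝ) / 2 ≤ c := by
    rw [hc, le_div_iff₀ hd]
    have : 1 / Real.exp 1 > 0 := by positivity
    linarith
  set k : ℝ := 1 / 2 + (c - 1 / 2) * (ε / 2) with hk
  -- exponent bound
  have hE : k * s ≤ s₁ * c + (s - s₁) / 2 := by
    have h1 : (c - 1 / 2) * ((ε / 2) * s) ≤ (c - 1 / 2) * s₁ :=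
      mul_le_mul_of_nonneg_left hs₁l (by linarith)
    nlinarith
  have hmono : Real.exp (-(s₁ * c) - (s - s₁) / 2) ≤ Real.exp (-(k * s)) := by
    apply Real.exp_le_exp.mpr; linarith
  -- convexity: exp(-k s) ≤ (1-s) + s exp(-k)
  have hconv : Real.exp (-(k * s)) ≤ (1 - s) * 1 + s * Real.exp (-k) := by
    have := convexOn_exp.2 (Set.mem_univ (0 : ℝ)) (Set.mem_univ (-k))
      (by linarith : (0:ℝ) ≤ 1 - s) hs0 (by ring)
    simpa [smul_eq_mul, mul_comm] using this
  have hfin : Real.exp (-(s₁ * c) - (s - s₁) / 2) ≤ 1 - (1 - Real.exp (-k)) * s := by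
    calc Real.exp (-(s₁ * c) - (s - s₁) / 2) ≤ Real.exp (-(k * s)) := hmono
      _ ≤ (1 - s) * 1 + s * Real.exp (-k) := hconv
      _ = 1 - (1 - Real.exp (-k)) * s := by ring
  have h1 : -(s₁ * c) - (s - s₁) / 2 = -(s₁ / (2 - 1 / Real.exp 1)) - (s - s₁) / 2 := by
    rw [hc]; ring
  have h2 : -k = -(1 / 2 + (1 / (2 - 1 / Real.exp 1) - 1 / 2) * (ε / 2)) := by
    rw [hk, hc]
  rw [h1, h2] at hfin
  linarith
end
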